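/- arXiv:2206.07688 — 4 statements merged into one kernel-verified Lean document; each statement's English description precedes it below -/
import Mathlib

section
/- For every summable weighted graph (G,m) whose vertex set has at least two elements, the top of the spectrum of the normalised Laplacian satisfies λ_top(Δ) ≤ 1 + √(1 − (1 − h̄(G,m))²). (Here h̄(G,m) ∈ [0,1], so the square root is real.) -/
open MeasureTheory

/-- A summable weighted graph on a vertex set `V`. -/
structure SummableWeightedGraph (V : Type*) where
  m : V → V → ℝ
  symm : ∀ u v, m u v = m v u
  nonneg : ∀ u v, 0 ≤ m u v
  loopless : ∀ v, m v v = 0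
  summable : Summable fun p : V × V => m p.1 p.2
  noIsolated : ∀ v, 0 < ∑' u, m v u

namespace SummableWeightedGraph

variable {V : Type*} (G : SummableWeightedGraph V)

/-- The weight of a vertex. -/
noncomputable def deg (v : V) : ℝ := ∑' u, G.m v u

/-- The weight of a set of vertices. -/
noncomputable def setWeight (S : Set V) : ℝ := ∑' v : S, G.deg v

/-- The weight of the boundary of a set of vertices. -/
noncomputable def boundaryWeight (S : Set V) : ℝ :=
  ∑' p : ↥S × ↥Sᶜ, G.m p.1 p.2

/-- The Cheeger constant. -/
noncomputable def cheegerConst : ℝ :=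
  sInf { r : ℝ | ∃ S : Set V, S.Nonempty ∧ G.setWeight S ≤ G.setWeight Sᶜ ∧
    r = G.boundaryWeight S / G.setWeight S }

/-- The weighted counting measure on vertices. -/
noncomputable def measure [MeasurableSpace V] : Measure V :=
  Measure.sum fun v => ENNReal.ofReal (G.deg v) • Measure.dirac v

/-- The normalised Laplacian, characterised by its pointwise formula. -/
def IsLaplacian [MeasurableSpace V]
    (L : Lp ℝ 2 G.measure →L[ℝ] Lp ℝ 2 G.measure) : Prop :=
  ∀ f : Lp ℝ 2 G.measure, ∀ᵐ v ∂G.measure,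
    L f v = f v - (G.deg v)⁻¹ * ∑' u, G.m v u * f u

end SummableWeightedGraph

namespace SummableWeightedGraph

variable {V : Type*} (G : SummableWeightedGraph V)

/-- Total weight `m(A,B)` of the edges joining `A` to `B`. -/
noncomputable def pairWeight (A B : Set V) : ℝ := ∑' q : ↥A × ↥B, G.m q.1 q.2

/-- The dual Cheeger ratio of a pair of disjoint nonempty sets of vertices. -/
noncomputable def dualCheegerRatio (A B : Set V) : ℝ :=
  2 * G.pairWeight A B / (G.setWeight A + G.setWeight B)

/-- The dual Cheeger constant. -/
noncomputable def dualCheegerConst : ℝ :=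
  sSup { r : ℝ | ∃ A B : Set V, A.Nonempty ∧ B.Nonempty ∧ Disjoint A B ∧
    r = G.dualCheegerRatio A B }

end SummableWeightedGraph

namespace SummableWeightedGraph

variable {V : Type*} (G : SummableWeightedGraph V)

lemma aux_deg_pos (v : V) : 0 < G.deg v := G.noIsolated v

lemma aux_deg_nonneg (v : V) : 0 ≤ G.deg v := (G.aux_deg_pos v).le

lemma aux_summable_row (v : V) : Summable (G.m v) := G.summable.prod_factor v

lemma aux_summable_deg : Summable G.deg := by
  have h := (summable_prod_of_nonneg (f := fun p : V × V => G.m p.1 p.2)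
    (fun p => G.nonneg p.1 p.2)).mp G.summable
  exact h.2

lemma aux_setWeight_nonneg (S : Set V) : 0 ≤ G.setWeight S :=
  tsum_nonneg fun v => G.aux_deg_nonneg v

lemma aux_summable_setWeight (S : Set V) : Summable fun v : S => G.deg v :=
  G.aux_summable_deg.subtype S

lemma aux_setWeight_pos {S : Set V} (h : S.Nonempty) : 0 < G.setWeight S := by
  obtain ⟨a, ha⟩ := h
  have := Summable.le_tsum (G.aux_summable_setWeight S) (⟨a, ha⟩ : S) fun _ _ => G.aux_deg_nonneg _
  exact lt_of_lt_of_le (G.aux_deg_pos a) this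

lemma aux_setWeight_eq (S : Set V) : G.setWeight S = ∑' v, Set.indicator S G.deg v :=
  tsum_subtype S G.deg

lemma aux_summable_pair_sub (A B : Set V) :
    Summable fun q : ↥A × ↥B => G.m q.1 q.2 := by
  have hinj : Function.Injective (fun q : ↥A × ↥B => ((q.1 : V), (q.2 : V))) := by
    rintro ⟨⟨a, ha⟩, ⟨b, hb⟩⟩ ⟨⟨a', ha'⟩, ⟨b', hb'⟩⟩ h
    simp only [Prod.mk.injEq] at h
    simp [h.1, h.2]
  exact G.summable.comp_injective hinj

lemma aux_pairWeight_nonneg (A B : Set V) : 0 ≤ G.pairWeight A B :=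
  tsum_nonneg fun q => G.nonneg _ _

lemma aux_pairWeight_eq (A B : Set V) :
    G.pairWeight A B = ∑' p : V × V, Set.indicator (A ×ˢ B) (fun p => G.m p.1 p.2) p := by
  rw [← tsum_subtype]
  exact ((Equiv.Set.prod A B).tsum_eq fun q : ↥A × ↥B => G.m q.1 q.2).symm

lemma aux_pairWeight_comm (A B : Set V) : G.pairWeight A B = G.pairWeight B A := by
  unfold pairWeight
  rw [← (Equiv.prodComm ↥B ↥A).tsum_eq fun q : ↥A × ↥B => G.m q.1 q.2]
  exact tsum_congr fun q => G.symm _ _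

lemma aux_pairWeight_le_left (A B : Set V) : G.pairWeight A B ≤ G.setWeight A := by
  have hB : Summable fun q : ↥A × V => G.m q.1 q.2 := by
    have hinj : Function.Injective (fun q : ↥A × V => ((q.1 : V), q.2)) := by
      rintro ⟨⟨a, ha⟩, b⟩ ⟨⟨a', ha'⟩, b'⟩ h
      simp only [Prod.mk.injEq] at h
      simp [h.1, h.2]
    exact G.summable.comp_injective hinj
  have key : G.pairWeight A B ≤ ∑' q : ↥A × V, G.m q.1 q.2 := by
    refine Summable.tsum_le_tsum_of_inj (fun q : ↥A × ↥B => ((q.1 : ↥A), (q.2 : V)))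
      ?_ (fun c _ => G.nonneg _ _) (fun q => le_rfl) (G.aux_summable_pair_sub A B) hB
    rintro ⟨a, ⟨b, hb⟩⟩ ⟨a', ⟨b', hb'⟩⟩ h
    simp only [Prod.mk.injEq] at h
    simp [h.1, h.2]
  refine key.trans_eq ?_
  rw [Summable.tsum_prod' hB fun a => (G.aux_summable_row a).comp_injective (fun x y h => h)]
  exact tsum_congr fun a => rfl

lemma aux_pairWeight_le_right (A B : Set V) : G.pairWeight A B ≤ G.setWeight B := by
  rw [G.aux_pairWeight_comm]
  exact G.aux_pairWeight_le_left B A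

lemma aux_ratio_mem_le_one {r : ℝ}
    (hr : r ∈ { r : ℝ | ∃ A B : Set V, A.Nonempty ∧ B.Nonempty ∧ Disjoint A B ∧
      r = G.dualCheegerRatio A B }) : 0 ≤ r ∧ r ≤ 1 := by
  obtain ⟨A, B, hA, hB, hD, rfl⟩ := hr
  have hden : 0 < G.setWeight A + G.setWeight B :=
    add_pos (G.aux_setWeight_pos hA) (G.aux_setWeight_pos hB)
  constructor
  · exact div_nonneg (by linarith [G.aux_pairWeight_nonneg A B]) hden.le
  · rw [dualCheegerRatio, div_le_one hden]
    linarith [G.aux_pairWeight_le_left A B, G.aux_pairWeight_le_right A B]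

lemma aux_bddAbove : BddAbove { r : ℝ | ∃ A B : Set V, A.Nonempty ∧ B.Nonempty ∧ Disjoint A B ∧
    r = G.dualCheegerRatio A B } :=
  ⟨1, fun _ hr => (G.aux_ratio_mem_le_one hr).2⟩

lemma aux_dual_le_one : G.dualCheegerConst ≤ 1 :=
  Real.sSup_le (fun _ hr => (G.aux_ratio_mem_le_one hr).2) zero_le_one

lemma aux_dual_nonneg [Nontrivial V] : 0 ≤ G.dualCheegerConst := by
  obtain ⟨u, v, huv⟩ := exists_pair_ne V
  have hmem : G.dualCheegerRatio {u} {v} ∈ { r : ℝ | ∃ A B : Set V, A.Nonempty ∧ B.Nonempty ∧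
      Disjoint A B ∧ r = G.dualCheegerRatio A B } :=
    ⟨{u}, {v}, Set.singleton_nonempty u, Set.singleton_nonempty v,
      Set.disjoint_singleton.mpr huv, rfl⟩
  have h0 : 0 ≤ G.dualCheegerRatio {u} {v} := (G.aux_ratio_mem_le_one hmem).1
  exact h0.trans (le_csSup G.aux_bddAbove hmem)

end SummableWeightedGraph

namespace SWGaux

/-- ρ(x,y): overlap of sweep sets contribution. -/
noncomputable def rho (x y : ℝ) : ℝ := if 0 < x ∧ y < 0 then min (x ^ 2) (y ^ 2) else 0

lemma rho_nonneg (x y : ℝ) : 0 ≤ rho x y := by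
  unfold rho; split <;> positivity

lemma rho_le_sq_fst (x y : ℝ) : rho x y ≤ x ^ 2 := by
  unfold rho; split
  · exact min_le_left _ _
  · positivity

/-- Pointwise identity: |x|x|+y|y|| + 2(ρ(x,y)+ρ(y,x)) = x² + y². -/
lemma abs_add_rho (x y : ℝ) :
    abs (x * |x| + y * |y|) + 2 * (rho x y + rho y x) = x ^ 2 + y ^ 2 := by
  unfold rho
  rcases lt_trichotomy 0 x with hx | hx | hx <;>
    rcases lt_trichotomy 0 y with hy | hy | hy
  · -- x>0, y>0
    rw [abs_of_pos hx, abs_of_pos hy, if_neg (by simp [not_and, hy.le, not_lt]),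
      if_neg (by simp [not_and, hx.le, not_lt]), abs_of_pos (by positivity)]
    ring
  · subst hy
    simp [abs_of_pos hx, abs_of_pos (mul_pos hx hx), sq]
  · -- x>0, y<0
    rw [abs_of_pos hx, abs_of_neg hy, if_pos ⟨hx, hy⟩,
      if_neg (by rintro ⟨h1, h2⟩; exact absurd hx (not_lt.2 h2.le))]
    rcases le_total (x ^ 2) (y ^ 2) with h | h
    · rw [min_eq_left h, abs_of_nonpos (by nlinarith)]; ring
    · rw [min_eq_right h, abs_of_nonneg (by nlinarith)]; ring
  · subst hx
    simp [abs_of_pos hy, sq, abs_of_nonneg (mul_nonneg hy.le hy.le)]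
  · subst hx; subst hy; simp
  · subst hx
    simp only [abs_of_neg hy, zero_mul, abs_zero, mul_zero, zero_add, lt_irrefl, false_and,
      and_false, if_false, add_zero]
    rw [abs_of_nonpos (by nlinarith)]
    ring
  · -- x<0, y>0
    rw [abs_of_neg hx, abs_of_pos hy,
      if_neg (by rintro ⟨h1, h2⟩; exact absurd hy (not_lt.2 h2.le)), if_pos ⟨hy, hx⟩]
    rcases le_total (x ^ 2) (y ^ 2) with h | h
    · rw [min_eq_right h, abs_of_nonneg (by nlinarith)]; ring
    · rw [min_eq_left h, abs_of_nonpos (by nlinarith)]; ring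
  · subst hy
    simp only [abs_of_neg hx, zero_mul, abs_zero, mul_zero, add_zero, lt_irrefl, and_false,
      false_and, if_false, zero_add]
    rw [abs_of_nonpos (by nlinarith)]
    ring
  · -- x<0, y<0
    rw [abs_of_neg hx, abs_of_neg hy, if_neg (by rintro ⟨h1, h2⟩; exact absurd h1 (not_lt.2 hx.le)),
      if_neg (by rintro ⟨h1, h2⟩; exact absurd h1 (not_lt.2 hy.le)), abs_of_nonpos (by nlinarith)]
    ring

/-- Pointwise key bound: 2s|x|x|+y|y|| ≤ s²(x+y)² + (x−y)², for s ≥ 1. -/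
lemma abs_le_comb {s : ℝ} (hs : 1 ≤ s) (x y : ℝ) :
    2 * s * abs (x * |x| + y * |y|) ≤ s ^ 2 * (x + y) ^ 2 + (x - y) ^ 2 := by
  rcases le_or_gt 0 (x * y) with hxy | hxy
  · rcases mul_nonneg_iff.mp hxy with ⟨hx, hy⟩ | ⟨hx, hy⟩
    · rw [abs_of_nonneg hx, abs_of_nonneg hy, abs_of_nonneg (by positivity)]
      nlinarith [mul_nonneg (mul_nonneg (sub_nonneg.2 hs) (sub_nonneg.2 hs)) (sq_nonneg (x + y)),
        mul_nonneg (sub_nonneg.2 hs) hxy]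
    · rw [abs_of_nonpos hx, abs_of_nonpos hy, abs_of_nonpos (by nlinarith)]
      nlinarith [mul_nonneg (mul_nonneg (sub_nonneg.2 hs) (sub_nonneg.2 hs)) (sq_nonneg (x + y)),
        mul_nonneg (sub_nonneg.2 hs) hxy]
  · have hs0 : 0 < s := lt_of_lt_of_le one_pos hs
    rcases mul_neg_iff.mp hxy with ⟨hx, hy⟩ | ⟨hx, hy⟩
    · rw [abs_of_pos hx, abs_of_neg hy]
      have : x * x + y * -y = (x + y) * (x - y) := by ring
      rw [this]
      rcases abs_cases ((x + y) * (x - y)) with ⟨he, _⟩ | ⟨he, _⟩ <;> rw [he] <;>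
        nlinarith [sq_nonneg (s * (x + y) - (x - y)), sq_nonneg (s * (x + y) + (x - y)),
          mul_nonneg (sub_nonneg.2 hs) (sq_nonneg (x + y))]
    · rw [abs_of_neg hx, abs_of_pos hy]
      have : x * -x + y * y = (x + y) * (y - x) := by ring
      rw [this]
      rcases abs_cases ((x + y) * (y - x)) with ⟨he, _⟩ | ⟨he, _⟩ <;> rw [he] <;>
        nlinarith [sq_nonneg (s * (x + y) - (x - y)), sq_nonneg (s * (x + y) + (x - y)),
          mul_nonneg (sub_nonneg.2 hs) (sq_nonneg (x + y))]

end SWGaux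
namespace SWGaux

lemma eq_zero_of_tsum_eq_zero {ι : Type*} {g : ι → ℝ} (hg : Summable g)
    (hnn : ∀ i, 0 ≤ g i) (h : ∑' i, g i = 0) (i : ι) : g i = 0 := by
  by_contra hi
  have h1 : 0 < g i := lt_of_le_of_ne (hnn i) (Ne.symm hi)
  have := Summable.le_tsum hg i fun j _ => hnn j
  linarith

/-- Generic layer-cake computation over a countable index. -/
lemma lintegral_sweep {ι : Type*} [Countable ι] (c a : ι → ℝ)
    (hc : ∀ i, 0 ≤ c i) (ha : ∀ i, 0 ≤ a i) (hc_sum : Summable c)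
    (hsum : Summable fun i => c i * a i) :
    ∫⁻ s in Set.Ioi (0 : ℝ),
        ENNReal.ofReal (∑' i, c i * Set.indicator (Set.Iio (a i)) (fun _ => (1 : ℝ)) s)
      = ENNReal.ofReal (∑' i, c i * a i) := by
  have hind_nonneg : ∀ i (s : ℝ), 0 ≤ c i * Set.indicator (Set.Iio (a i)) (fun _ => (1:ℝ)) s := by
    intro i s
    apply mul_nonneg (hc i)
    exact Set.indicator_nonneg (fun _ _ => zero_le_one) s
  have hind_summ : ∀ s : ℝ, Summable fun i => c i * Set.indicator (Set.Iio (a i)) (fun _ => (1:ℝ)) s := by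
    intro s
    apply Summable.of_nonneg_of_le (fun i => hind_nonneg i s) _ hc_sum
    intro i
    rcases Set.indicator_eq_zero_or_self (Set.Iio (a i)) (fun _ => (1:ℝ)) s with h | h <;>
      rw [h] <;> simp [hc i]
  have hrw : ∀ s : ℝ,
      ENNReal.ofReal (∑' i, c i * Set.indicator (Set.Iio (a i)) (fun _ => (1:ℝ)) s)
        = ∑' i, Set.indicator (Set.Iio (a i)) (fun _ => ENNReal.ofReal (c i)) s := by
    intro s
    rw [ENNReal.ofReal_tsum_of_nonneg (fun i => hind_nonneg i s) (hind_summ s)]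
    congr 1
    funext i
    by_cases h : s ∈ Set.Iio (a i)
    · rw [Set.indicator_of_mem h, Set.indicator_of_mem h, mul_one]
    · rw [Set.indicator_of_notMem h, Set.indicator_of_notMem h, mul_zero, ENNReal.ofReal_zero]
  simp_rw [hrw]
  rw [lintegral_tsum]
  · have hterm : ∀ i, ∫⁻ s in Set.Ioi (0:ℝ),
        Set.indicator (Set.Iio (a i)) (fun _ => ENNReal.ofReal (c i)) s
          = ENNReal.ofReal (c i) * ENNReal.ofReal (a i) := by
      intro i
      rw [lintegral_indicator measurableSet_Iio, Measure.restrict_restrict measurableSet_Iio,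
        setLIntegral_const, Set.Iio_inter_Ioi, Real.volume_Ioo, sub_zero]
    simp_rw [hterm]
    rw [show (∑' i, ENNReal.ofReal (c i) * ENNReal.ofReal (a i))
          = ∑' i, ENNReal.ofReal (c i * a i) from
        tsum_congr fun i => (ENNReal.ofReal_mul (hc i)).symm,
      ← ENNReal.ofReal_tsum_of_nonneg (fun i => mul_nonneg (hc i) (ha i)) hsum]
  · intro i
    exact (Measurable.indicator measurable_const measurableSet_Iio).aemeasurable

end SWGaux

namespace SummableWeightedGraph

open SWGaux

variable {V : Type*} (G : SummableWeightedGraph V)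

lemma swap_summable {F : V × V → ℝ} (h : Summable F) :
    Summable fun p : V × V => F (p.2, p.1) :=
  (Equiv.prodComm V V).summable_iff.mpr h

lemma tsum_swap (F : V × V → ℝ) : ∑' p : V × V, F (p.2, p.1) = ∑' p, F p :=
  (Equiv.prodComm V V).tsum_eq F

section Core

variable (f : V → ℝ)

lemma aux_SP1 (S2 : Summable fun v => G.deg v * f v ^ 2) :
    Summable fun p : V × V => G.m p.1 p.2 * f p.1 ^ 2 := by
  refine (summable_prod_of_nonneg (f := fun p : V × V => G.m p.1 p.2 * f p.1 ^ 2)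
    (fun p => mul_nonneg (G.nonneg _ _) (sq_nonneg _))).mpr ⟨fun v => ?_, ?_⟩
  · show Summable fun u => G.m v u * f v ^ 2
    exact (G.aux_summable_row v).mul_right _
  · refine S2.congr fun v => ?_
    show G.deg v * f v ^ 2 = ∑' u, G.m v u * f v ^ 2
    rw [SummableWeightedGraph.deg, ← tsum_mul_right]

lemma aux_SP2 (S2 : Summable fun v => G.deg v * f v ^ 2) :
    Summable fun p : V × V => G.m p.1 p.2 * f p.2 ^ 2 :=
  (swap_summable (G.aux_SP1 f S2)).congr fun p => by rw [G.symm p.2 p.1]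

lemma aux_SS (S2 : Summable fun v => G.deg v * f v ^ 2) :
    Summable fun p : V × V => G.m p.1 p.2 * f p.1 * f p.2 := by
  rw [← summable_abs_iff]
  refine Summable.of_nonneg_of_le (fun p => abs_nonneg _) (fun p => ?_)
    (((G.aux_SP1 f S2).add (G.aux_SP2 f S2)).mul_left (1 / 2))
  have hm := G.nonneg p.1 p.2
  rw [abs_mul, abs_mul, abs_of_nonneg hm]
  nlinarith [sq_nonneg (|f p.1| - |f p.2|), sq_abs (f p.1), sq_abs (f p.2),
    abs_nonneg (f p.1), abs_nonneg (f p.2)]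

lemma aux_ST (S2 : Summable fun v => G.deg v * f v ^ 2) :
    Summable fun p : V × V => G.m p.1 p.2 * (f p.1 + f p.2) ^ 2 := by
  refine Summable.of_nonneg_of_le (fun p => mul_nonneg (G.nonneg _ _) (sq_nonneg _))
    (fun p => ?_) (((G.aux_SP1 f S2).add (G.aux_SP2 f S2)).mul_left 2)
  have hm := G.nonneg p.1 p.2
  nlinarith [mul_nonneg hm (sq_nonneg (f p.1 - f p.2))]

lemma aux_SQ (S2 : Summable fun v => G.deg v * f v ^ 2) :
    Summable fun p : V × V => G.m p.1 p.2 * (f p.1 - f p.2) ^ 2 := by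
  refine Summable.of_nonneg_of_le (fun p => mul_nonneg (G.nonneg _ _) (sq_nonneg _))
    (fun p => ?_) (((G.aux_SP1 f S2).add (G.aux_SP2 f S2)).mul_left 2)
  have hm := G.nonneg p.1 p.2
  nlinarith [mul_nonneg hm (sq_nonneg (f p.1 + f p.2))]

lemma aux_SH (S2 : Summable fun v => G.deg v * f v ^ 2) :
    Summable fun p : V × V => G.m p.1 p.2 * abs (f p.1 * |f p.1| + f p.2 * |f p.2|) := by
  refine Summable.of_nonneg_of_le (fun p => mul_nonneg (G.nonneg _ _) (abs_nonneg _))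
    (fun p => ?_) ((G.aux_SP1 f S2).add (G.aux_SP2 f S2))
  have hm := G.nonneg p.1 p.2
  have h1 : abs (f p.1 * |f p.1| + f p.2 * |f p.2|) ≤ f p.1 ^ 2 + f p.2 ^ 2 := by
    refine (abs_add_le _ _).trans ?_
    rw [abs_mul, abs_mul, abs_abs, ← sq_abs (f p.1), ← sq_abs (f p.2)]
    simp [sq]
  nlinarith

lemma aux_Srho (S2 : Summable fun v => G.deg v * f v ^ 2) :
    Summable fun p : V × V => G.m p.1 p.2 * SWGaux.rho (f p.1) (f p.2) := by
  refine Summable.of_nonneg_of_le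
    (fun p => mul_nonneg (G.nonneg _ _) (SWGaux.rho_nonneg _ _)) (fun p => ?_) (G.aux_SP1 f S2)
  exact mul_le_mul_of_nonneg_left (SWGaux.rho_le_sq_fst _ _) (G.nonneg _ _)

lemma aux_tsum_fst (S2 : Summable fun v => G.deg v * f v ^ 2) :
    ∑' p : V × V, G.m p.1 p.2 * f p.1 ^ 2 = ∑' v, G.deg v * f v ^ 2 := by
  rw [Summable.tsum_prod' (G.aux_SP1 f S2) fun v => by
    show Summable fun u => G.m v u * f v ^ 2
    exact (G.aux_summable_row v).mul_right _]
  refine tsum_congr fun v => ?_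
  show (∑' u, G.m v u * f v ^ 2) = G.deg v * f v ^ 2
  rw [SummableWeightedGraph.deg, ← tsum_mul_right]

lemma aux_tsum_snd (S2 : Summable fun v => G.deg v * f v ^ 2) :
    ∑' p : V × V, G.m p.1 p.2 * f p.2 ^ 2 = ∑' v, G.deg v * f v ^ 2 := by
  rw [← G.aux_tsum_fst f S2, ← tsum_swap (fun p : V × V => G.m p.1 p.2 * f p.1 ^ 2)]
  exact tsum_congr fun p => by rw [G.symm p.2 p.1]

lemma aux_tsum_rho_swap (S2 : Summable fun v => G.deg v * f v ^ 2) :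
    ∑' p : V × V, G.m p.1 p.2 * SWGaux.rho (f p.2) (f p.1)
      = ∑' p : V × V, G.m p.1 p.2 * SWGaux.rho (f p.1) (f p.2) := by
  rw [← tsum_swap (fun p : V × V => G.m p.1 p.2 * SWGaux.rho (f p.1) (f p.2))]
  exact tsum_congr fun p => by rw [G.symm p.2 p.1]

lemma aux_pairWeight_zero_right (A : Set V) {B : Set V} (h : B = ∅) : G.pairWeight A B = 0 := by
  subst h
  haveI : IsEmpty (↥(∅ : Set V)) := Set.isEmpty_coe_sort.mpr rfl
  exact tsum_empty

lemma aux_pairWeight_zero_left {A : Set V} (B : Set V) (h : A = ∅) : G.pairWeight A B = 0 := by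
  rw [G.aux_pairWeight_comm]
  exact G.aux_pairWeight_zero_right B h

lemma aux_key1 [Nontrivial V] (s : ℝ) :
    2 * G.pairWeight {v | 0 < f v ∧ s < f v ^ 2} {v | f v < 0 ∧ s < f v ^ 2}
      ≤ G.dualCheegerConst * (G.setWeight {v | 0 < f v ∧ s < f v ^ 2}
        + G.setWeight {v | f v < 0 ∧ s < f v ^ 2}) := by
  set A : Set V := {v | 0 < f v ∧ s < f v ^ 2} with hAdef
  set B : Set V := {v | f v < 0 ∧ s < f v ^ 2} with hBdef
  by_cases hA : A.Nonempty
  · by_cases hB : B.Nonempty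
    · have hdisj : Disjoint A B := by
        rw [Set.disjoint_left]
        rintro v ⟨h1, -⟩ ⟨h2, -⟩
        exact absurd h1 (not_lt.2 h2.le)
      have hmem : G.dualCheegerRatio A B ∈ { r : ℝ | ∃ A B : Set V, A.Nonempty ∧ B.Nonempty ∧
          Disjoint A B ∧ r = G.dualCheegerRatio A B } := ⟨A, B, hA, hB, hdisj, rfl⟩
      have hle : G.dualCheegerRatio A B ≤ G.dualCheegerConst := le_csSup G.aux_bddAbove hmem
      have hD : 0 < G.setWeight A + G.setWeight B :=
        add_pos (G.aux_setWeight_pos hA) (G.aux_setWeight_pos hB)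
      have h2pw : 2 * G.pairWeight A B
          = G.dualCheegerRatio A B * (G.setWeight A + G.setWeight B) := by
        rw [dualCheegerRatio, div_mul_cancel₀ _ hD.ne']
      rw [h2pw]
      exact mul_le_mul_of_nonneg_right hle hD.le
    · rw [G.aux_pairWeight_zero_right A (Set.not_nonempty_iff_eq_empty.mp hB), mul_zero]
      exact mul_nonneg G.aux_dual_nonneg
        (add_nonneg (G.aux_setWeight_nonneg A) (G.aux_setWeight_nonneg B))
  · rw [G.aux_pairWeight_zero_left B (Set.not_nonempty_iff_eq_empty.mp hA), mul_zero]
    exact mul_nonneg G.aux_dual_nonneg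
      (add_nonneg (G.aux_setWeight_nonneg A) (G.aux_setWeight_nonneg B))

lemma aux_lint_D [Countable V] (S2 : Summable fun v => G.deg v * f v ^ 2) :
    (∫⁻ s in Set.Ioi (0 : ℝ), ENNReal.ofReal (G.setWeight {v | 0 < f v ∧ s < f v ^ 2}
        + G.setWeight {v | f v < 0 ∧ s < f v ^ 2}))
      = ENNReal.ofReal (∑' v, G.deg v * f v ^ 2) := by
  have hptwise : ∀ v : V, G.deg v * f v ^ 2 = G.deg v * (if f v = 0 then 0 else f v ^ 2) := by
    intro v
    by_cases h : f v = 0 <;> simp [h]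
  have base := SWGaux.lintegral_sweep (c := G.deg) (a := fun v => if f v = 0 then 0 else f v ^ 2)
    G.aux_deg_nonneg (fun v => by split <;> positivity) G.aux_summable_deg
    (S2.congr fun v => hptwise v)
  rw [← tsum_congr hptwise] at base
  rw [← base]
  refine setLIntegral_congr_fun measurableSet_Ioi (fun s hs => ?_)
  have hs0 : (0 : ℝ) < s := hs
  congr 1
  rw [G.aux_setWeight_eq, G.aux_setWeight_eq, ← Summable.tsum_add
    (Summable.of_nonneg_of_le (fun v => Set.indicator_nonneg (fun u _ => G.aux_deg_nonneg u) v)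
      (fun v => Set.indicator_le_self' (fun u _ => G.aux_deg_nonneg u) v) G.aux_summable_deg)
    (Summable.of_nonneg_of_le (fun v => Set.indicator_nonneg (fun u _ => G.aux_deg_nonneg u) v)
      (fun v => Set.indicator_le_self' (fun u _ => G.aux_deg_nonneg u) v) G.aux_summable_deg)]
  refine tsum_congr fun v => ?_
  rcases lt_trichotomy (f v) 0 with hneg | h0 | hpos
  · by_cases hs2 : s < f v ^ 2 <;>
      simp [Set.indicator_apply, Set.mem_setOf_eq, Set.mem_Iio, hneg, hneg.ne, hs2,
        asymm hneg, not_lt.2 hneg.le]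
  · simp [Set.indicator_apply, Set.mem_setOf_eq, Set.mem_Iio, h0, not_lt.2 hs0.le]
  · by_cases hs2 : s < f v ^ 2 <;>
      simp [Set.indicator_apply, Set.mem_setOf_eq, Set.mem_Iio, hpos, hpos.ne', hs2,
        asymm hpos, not_lt.2 hpos.le]

lemma aux_lint_P [Countable V] (S2 : Summable fun v => G.deg v * f v ^ 2) :
    (∫⁻ s in Set.Ioi (0 : ℝ), ENNReal.ofReal (G.pairWeight {v | 0 < f v ∧ s < f v ^ 2}
        {v | f v < 0 ∧ s < f v ^ 2}))
      = ENNReal.ofReal (∑' p : V × V, G.m p.1 p.2 * SWGaux.rho (f p.1) (f p.2)) := by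
  have base := SWGaux.lintegral_sweep (c := fun p : V × V => G.m p.1 p.2)
    (a := fun p : V × V => SWGaux.rho (f p.1) (f p.2)) (fun p => G.nonneg _ _)
    (fun p => SWGaux.rho_nonneg _ _) G.summable (G.aux_Srho f S2)
  rw [← base]
  refine setLIntegral_congr_fun measurableSet_Ioi (fun s hs => ?_)
  have hs0 : (0 : ℝ) < s := hs
  congr 1
  rw [G.aux_pairWeight_eq]
  refine tsum_congr fun p => ?_
  unfold SWGaux.rho
  by_cases hc : 0 < f p.1 ∧ f p.2 < 0
  · rw [if_pos hc]
    by_cases hp : p ∈ ({v | 0 < f v ∧ s < f v ^ 2} ×ˢ {v | f v < 0 ∧ s < f v ^ 2} : Set (V × V))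
    · obtain ⟨⟨-, h1s⟩, ⟨-, h2s⟩⟩ := hp
      rw [Set.indicator_of_mem (by exact ⟨⟨hc.1, h1s⟩, ⟨hc.2, h2s⟩⟩),
        Set.indicator_of_mem (Set.mem_Iio.mpr (lt_min h1s h2s)), mul_one]
    · rw [Set.indicator_of_notMem hp, Set.indicator_of_notMem, mul_zero]
      rw [Set.mem_Iio, lt_min_iff]
      rintro ⟨h1s, h2s⟩
      exact hp ⟨⟨hc.1, h1s⟩, ⟨hc.2, h2s⟩⟩
  · rw [if_neg hc]
    have hp : p ∉ ({v | 0 < f v ∧ s < f v ^ 2} ×ˢ {v | f v < 0 ∧ s < f v ^ 2} : Set (V × V)) := by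
      rintro ⟨⟨h1, -⟩, ⟨h2, -⟩⟩
      exact hc ⟨h1, h2⟩
    rw [Set.indicator_of_notMem hp, Set.indicator_of_notMem, mul_zero]
    rw [Set.mem_Iio]
    exact not_lt.2 hs0.le

lemma aux_sweep [Countable V] [Nontrivial V] (S2 : Summable fun v => G.deg v * f v ^ 2) :
    2 * (∑' p : V × V, G.m p.1 p.2 * SWGaux.rho (f p.1) (f p.2))
      ≤ G.dualCheegerConst * ∑' v, G.deg v * f v ^ 2 := by
  have hrnn : 0 ≤ ∑' p : V × V, G.m p.1 p.2 * SWGaux.rho (f p.1) (f p.2) :=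
    tsum_nonneg fun p => mul_nonneg (G.nonneg _ _) (SWGaux.rho_nonneg _ _)
  have hWnn : 0 ≤ ∑' v, G.deg v * f v ^ 2 :=
    tsum_nonneg fun v => mul_nonneg (G.aux_deg_nonneg v) (sq_nonneg _)
  refine (ENNReal.ofReal_le_ofReal_iff (mul_nonneg G.aux_dual_nonneg hWnn)).mp ?_
  calc ENNReal.ofReal (2 * ∑' p : V × V, G.m p.1 p.2 * SWGaux.rho (f p.1) (f p.2))
      = 2 * ENNReal.ofReal (∑' p : V × V, G.m p.1 p.2 * SWGaux.rho (f p.1) (f p.2)) := by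
        rw [ENNReal.ofReal_mul (by norm_num : (0:ℝ) ≤ 2)]
        norm_num
    _ = 2 * ∫⁻ s in Set.Ioi (0 : ℝ), ENNReal.ofReal (G.pairWeight {v | 0 < f v ∧ s < f v ^ 2}
          {v | f v < 0 ∧ s < f v ^ 2}) := by rw [G.aux_lint_P f S2]
    _ = ∫⁻ s in Set.Ioi (0 : ℝ), 2 * ENNReal.ofReal (G.pairWeight {v | 0 < f v ∧ s < f v ^ 2}
          {v | f v < 0 ∧ s < f v ^ 2}) := (lintegral_const_mul' 2 _ (by norm_num)).symm
    _ ≤ ∫⁻ s in Set.Ioi (0 : ℝ), ENNReal.ofReal (G.dualCheegerConst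
          * (G.setWeight {v | 0 < f v ∧ s < f v ^ 2}
            + G.setWeight {v | f v < 0 ∧ s < f v ^ 2})) := by
        refine lintegral_mono fun s => ?_
        rw [show (2 : ENNReal) = ENNReal.ofReal (2:ℝ) by norm_num, ← ENNReal.ofReal_mul
          (by norm_num : (0:ℝ) ≤ 2)]
        exact ENNReal.ofReal_le_ofReal (G.aux_key1 f s)
    _ = ∫⁻ s in Set.Ioi (0 : ℝ), ENNReal.ofReal G.dualCheegerConst
          * ENNReal.ofReal (G.setWeight {v | 0 < f v ∧ s < f v ^ 2}
            + G.setWeight {v | f v < 0 ∧ s < f v ^ 2}) := by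
        refine lintegral_congr fun s => ?_
        rw [ENNReal.ofReal_mul G.aux_dual_nonneg]
    _ = ENNReal.ofReal G.dualCheegerConst * ∫⁻ s in Set.Ioi (0 : ℝ),
          ENNReal.ofReal (G.setWeight {v | 0 < f v ∧ s < f v ^ 2}
            + G.setWeight {v | f v < 0 ∧ s < f v ^ 2}) :=
        lintegral_const_mul' _ _ ENNReal.ofReal_ne_top
    _ = ENNReal.ofReal G.dualCheegerConst * ENNReal.ofReal (∑' v, G.deg v * f v ^ 2) := by
        rw [G.aux_lint_D f S2]
    _ = ENNReal.ofReal (G.dualCheegerConst * ∑' v, G.deg v * f v ^ 2) :=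
        (ENNReal.ofReal_mul G.aux_dual_nonneg).symm

lemma aux_claimC (S2 : Summable fun v => G.deg v * f v ^ 2)
    (hTQ : (∑' p : V × V, G.m p.1 p.2 * (f p.1 + f p.2) ^ 2)
        ≤ ∑' p : V × V, G.m p.1 p.2 * (f p.1 - f p.2) ^ 2) :
    (∑' p : V × V, G.m p.1 p.2 * abs (f p.1 * |f p.1| + f p.2 * |f p.2|))
      ≤ Real.sqrt ((∑' p : V × V, G.m p.1 p.2 * (f p.1 + f p.2) ^ 2)
          * ∑' p : V × V, G.m p.1 p.2 * (f p.1 - f p.2) ^ 2) := by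
  set T2 := ∑' p : V × V, G.m p.1 p.2 * (f p.1 + f p.2) ^ 2 with hT2def
  set Q2 := ∑' p : V × V, G.m p.1 p.2 * (f p.1 - f p.2) ^ 2 with hQ2def
  have hT2nn : 0 ≤ T2 := tsum_nonneg fun p => mul_nonneg (G.nonneg _ _) (sq_nonneg _)
  by_cases hT20 : T2 = 0
  · have hz : ∀ p : V × V, G.m p.1 p.2 * (f p.1 + f p.2) ^ 2 = 0 :=
      SWGaux.eq_zero_of_tsum_eq_zero (G.aux_ST f S2)
        (fun p => mul_nonneg (G.nonneg _ _) (sq_nonneg _)) hT20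
    have hH : (∑' p : V × V, G.m p.1 p.2 * abs (f p.1 * |f p.1| + f p.2 * |f p.2|)) = 0 := by
      rw [show (fun p : V × V => G.m p.1 p.2 * abs (f p.1 * |f p.1| + f p.2 * |f p.2|))
          = fun _ => (0:ℝ) from funext fun p => ?_, tsum_zero]
      rcases mul_eq_zero.mp (hz p) with hm | hxy
      · rw [hm, zero_mul]
      · have h0 : f p.1 + f p.2 = 0 := by
          have := pow_eq_zero_iff (n := 2) (by norm_num) |>.mp hxy
          exact this
        have h2 : f p.2 = -f p.1 := by linarith
        rw [h2, abs_neg, neg_mul, add_neg_cancel, abs_zero, mul_zero]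
    rw [hH]
    exact Real.sqrt_nonneg _
  · have hT2pos : 0 < T2 := lt_of_le_of_ne hT2nn (Ne.symm hT20)
    have hQ2pos : 0 < Q2 := lt_of_lt_of_le hT2pos hTQ
    set σ := Real.sqrt (Q2 / T2) with hσdef
    have hσ1 : 1 ≤ σ := Real.one_le_sqrt.mpr ((one_le_div hT2pos).mpr hTQ)
    have hσ0 : 0 < σ := lt_of_lt_of_le one_pos hσ1
    have key : (∑' p : V × V, 2 * σ * (G.m p.1 p.2 * abs (f p.1 * |f p.1| + f p.2 * |f p.2|)))
        ≤ ∑' p : V × V, (σ ^ 2 * (G.m p.1 p.2 * (f p.1 + f p.2) ^ 2)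
            + G.m p.1 p.2 * (f p.1 - f p.2) ^ 2) := by
      refine Summable.tsum_le_tsum (fun p => ?_) ((G.aux_SH f S2).mul_left (2 * σ))
        (((G.aux_ST f S2).mul_left (σ ^ 2)).add (G.aux_SQ f S2))
      have h := SWGaux.abs_le_comb hσ1 (f p.1) (f p.2)
      have hm := G.nonneg p.1 p.2
      nlinarith [mul_le_mul_of_nonneg_left h hm]
    rw [tsum_mul_left, Summable.tsum_add ((G.aux_ST f S2).mul_left (σ ^ 2)) (G.aux_SQ f S2),
      tsum_mul_left, ← hT2def, ← hQ2def] at key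
    have hσ2 : σ ^ 2 = Q2 / T2 := Real.sq_sqrt (div_nonneg hQ2pos.le hT2pos.le)
    rw [hσ2, div_mul_cancel₀ _ hT2pos.ne'] at key
    have hH2 : (∑' p : V × V, G.m p.1 p.2 * abs (f p.1 * |f p.1| + f p.2 * |f p.2|)) ≤ Q2 / σ := by
      rw [le_div_iff₀ hσ0]
      nlinarith [key]
    refine hH2.trans (le_of_eq ?_)
    have hsq : (Q2 / σ) ^ 2 = T2 * Q2 := by
      rw [div_pow, hσ2]
      field_simp
    rw [show T2 * Q2 = (Q2 / σ) ^ 2 from hsq.symm, Real.sqrt_sq (div_nonneg hQ2pos.le hσ0.le)]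

lemma aux_core [Countable V] [Nontrivial V] (S2 : Summable fun v => G.deg v * f v ^ 2) :
    (∑' v, G.deg v * f v ^ 2) - (∑' p : V × V, G.m p.1 p.2 * f p.1 * f p.2)
      ≤ (1 + Real.sqrt (1 - (1 - G.dualCheegerConst) ^ 2)) * ∑' v, G.deg v * f v ^ 2 := by
  set hb := G.dualCheegerConst with hbdef
  set W := ∑' v, G.deg v * f v ^ 2 with hWdef
  set S := ∑' p : V × V, G.m p.1 p.2 * f p.1 * f p.2 with hSdef
  set T2 := ∑' p : V × V, G.m p.1 p.2 * (f p.1 + f p.2) ^ 2 with hT2def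
  set Q2 := ∑' p : V × V, G.m p.1 p.2 * (f p.1 - f p.2) ^ 2 with hQ2def
  set H := ∑' p : V × V, G.m p.1 p.2 * abs (f p.1 * |f p.1| + f p.2 * |f p.2|) with hHdef
  set Srho := ∑' p : V × V, G.m p.1 p.2 * SWGaux.rho (f p.1) (f p.2) with hSrhodef
  have hWnn : 0 ≤ W :=
    tsum_nonneg fun v => mul_nonneg (G.aux_deg_nonneg v) (sq_nonneg _)
  have hT2nn : 0 ≤ T2 := tsum_nonneg fun p => mul_nonneg (G.nonneg _ _) (sq_nonneg _)
  have hb0 : 0 ≤ hb := G.aux_dual_nonneg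
  have hb1 : hb ≤ 1 := G.aux_dual_le_one
  have hR0 : 0 ≤ 1 - (1 - hb) ^ 2 := by nlinarith
  have hr0 : 0 ≤ Real.sqrt (1 - (1 - hb) ^ 2) := Real.sqrt_nonneg _
  have hr2 : Real.sqrt (1 - (1 - hb) ^ 2) ^ 2 = 1 - (1 - hb) ^ 2 := Real.sq_sqrt hR0
  -- identities
  have hT2id : T2 = 2 * W + 2 * S := by
    calc T2 = ∑' p : V × V, ((G.m p.1 p.2 * f p.1 ^ 2 + G.m p.1 p.2 * f p.2 ^ 2)
          + 2 * (G.m p.1 p.2 * f p.1 * f p.2)) := tsum_congr fun p => by ring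
      _ = (∑' p : V × V, (G.m p.1 p.2 * f p.1 ^ 2 + G.m p.1 p.2 * f p.2 ^ 2))
          + ∑' p : V × V, 2 * (G.m p.1 p.2 * f p.1 * f p.2) :=
        Summable.tsum_add ((G.aux_SP1 f S2).add (G.aux_SP2 f S2)) ((G.aux_SS f S2).mul_left 2)
      _ = ((∑' p : V × V, G.m p.1 p.2 * f p.1 ^ 2) + ∑' p : V × V, G.m p.1 p.2 * f p.2 ^ 2)
          + 2 * S := by rw [Summable.tsum_add (G.aux_SP1 f S2) (G.aux_SP2 f S2), tsum_mul_left]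
      _ = 2 * W + 2 * S := by
          rw [G.aux_tsum_fst f S2, G.aux_tsum_snd f S2, ← hWdef]; ring
  have hQ2id : Q2 = 2 * W - 2 * S := by
    calc Q2 = ∑' p : V × V, ((G.m p.1 p.2 * f p.1 ^ 2 + G.m p.1 p.2 * f p.2 ^ 2)
          - 2 * (G.m p.1 p.2 * f p.1 * f p.2)) := tsum_congr fun p => by ring
      _ = (∑' p : V × V, (G.m p.1 p.2 * f p.1 ^ 2 + G.m p.1 p.2 * f p.2 ^ 2))
          - ∑' p : V × V, 2 * (G.m p.1 p.2 * f p.1 * f p.2) :=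
        Summable.tsum_sub ((G.aux_SP1 f S2).add (G.aux_SP2 f S2)) ((G.aux_SS f S2).mul_left 2)
      _ = ((∑' p : V × V, G.m p.1 p.2 * f p.1 ^ 2) + ∑' p : V × V, G.m p.1 p.2 * f p.2 ^ 2)
          - 2 * S := by rw [Summable.tsum_add (G.aux_SP1 f S2) (G.aux_SP2 f S2), tsum_mul_left]
      _ = 2 * W - 2 * S := by
          rw [G.aux_tsum_fst f S2, G.aux_tsum_snd f S2, ← hWdef]; ring
  have hSrho' : Summable fun p : V × V => G.m p.1 p.2 * SWGaux.rho (f p.2) (f p.1) :=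
    (swap_summable (G.aux_Srho f S2)).congr fun p => by rw [G.symm p.2 p.1]
  have hHrho : H + 4 * Srho = 2 * W := by
    have e3 : ∀ p : V × V, G.m p.1 p.2 * abs (f p.1 * |f p.1| + f p.2 * |f p.2|)
        + 2 * (G.m p.1 p.2 * SWGaux.rho (f p.1) (f p.2)
          + G.m p.1 p.2 * SWGaux.rho (f p.2) (f p.1))
        = G.m p.1 p.2 * f p.1 ^ 2 + G.m p.1 p.2 * f p.2 ^ 2 := fun p => by
      linear_combination (G.m p.1 p.2) * (SWGaux.abs_add_rho (f p.1) (f p.2))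
    have hsum1 : Summable fun p : V × V => G.m p.1 p.2 * SWGaux.rho (f p.1) (f p.2)
        + G.m p.1 p.2 * SWGaux.rho (f p.2) (f p.1) := (G.aux_Srho f S2).add hSrho'
    calc H + 4 * Srho
        = H + 2 * (Srho + Srho) := by ring
      _ = H + 2 * (Srho + ∑' p : V × V, G.m p.1 p.2 * SWGaux.rho (f p.2) (f p.1)) := by
          rw [G.aux_tsum_rho_swap f S2, ← hSrhodef]
      _ = H + 2 * ∑' p : V × V, (G.m p.1 p.2 * SWGaux.rho (f p.1) (f p.2)
            + G.m p.1 p.2 * SWGaux.rho (f p.2) (f p.1)) := by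
          rw [Summable.tsum_add (G.aux_Srho f S2) hSrho', ← hSrhodef]
      _ = H + ∑' p : V × V, 2 * (G.m p.1 p.2 * SWGaux.rho (f p.1) (f p.2)
            + G.m p.1 p.2 * SWGaux.rho (f p.2) (f p.1)) := by rw [tsum_mul_left]
      _ = ∑' p : V × V, (G.m p.1 p.2 * abs (f p.1 * |f p.1| + f p.2 * |f p.2|)
            + 2 * (G.m p.1 p.2 * SWGaux.rho (f p.1) (f p.2)
              + G.m p.1 p.2 * SWGaux.rho (f p.2) (f p.1))) := by
          rw [hHdef, ← Summable.tsum_add (G.aux_SH f S2) (hsum1.mul_left 2)]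
      _ = ∑' p : V × V, (G.m p.1 p.2 * f p.1 ^ 2 + G.m p.1 p.2 * f p.2 ^ 2) :=
          tsum_congr e3
      _ = 2 * W := by
          rw [Summable.tsum_add (G.aux_SP1 f S2) (G.aux_SP2 f S2), G.aux_tsum_fst f S2,
            G.aux_tsum_snd f S2, ← hWdef]; ring
  -- case split
  by_cases hcase : 2 * W ≤ T2
  · have hS0 : 0 ≤ S := by linarith
    nlinarith [mul_nonneg hr0 hWnn]
  · push_neg at hcase
    have hTQ : T2 ≤ Q2 := by linarith
    have hC : H ≤ Real.sqrt (T2 * Q2) := G.aux_claimC f S2 hTQ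
    have hsweep : 2 * Srho ≤ hb * W := G.aux_sweep f S2
    have hP : (1 - hb) * W ≤ Real.sqrt (T2 * Q2) / 2 := by linarith
    have hPnn : 0 ≤ (1 - hb) * W := mul_nonneg (by linarith) hWnn
    have hsq : ((1 - hb) * W) ^ 2 ≤ T2 * Q2 / 4 := by
      have h2 := pow_le_pow_left₀ hPnn hP 2
      rw [div_pow, Real.sq_sqrt (mul_nonneg hT2nn (by linarith : (0:ℝ) ≤ Q2))] at h2
      linarith
    have hQT : Q2 = 4 * W - T2 := by linarith
    have expand : (W - T2 / 2) ^ 2 = W ^ 2 - T2 * Q2 / 4 := by rw [hQT]; ring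
    have hfin : (W - T2 / 2) ^ 2 ≤ (Real.sqrt (1 - (1 - hb) ^ 2) * W) ^ 2 := by
      have hid : (Real.sqrt (1 - (1 - hb) ^ 2) * W) ^ 2 = W ^ 2 - ((1 - hb) * W) ^ 2 := by
        rw [mul_pow, hr2]; ring
      rw [hid, expand]
      linarith
    have habs := Real.sqrt_le_sqrt hfin
    rw [Real.sqrt_sq_eq_abs, Real.sqrt_sq_eq_abs] at habs
    have h2 : W - T2 / 2 ≤ Real.sqrt (1 - (1 - hb) ^ 2) * W :=
      le_trans (le_abs_self _)
        (habs.trans_eq (abs_of_nonneg (mul_nonneg hr0 hWnn)))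
    linarith

end Core

section Operator

open RealInnerProductSpace

variable [MeasurableSpace V] [MeasurableSingletonClass V]

lemma aux_measure_singleton (v : V) :
    ENNReal.ofReal (G.deg v) ≤ G.measure {v} := by
  rw [SummableWeightedGraph.measure, Measure.sum_apply _ (measurableSet_singleton v)]
  refine le_trans (le_of_eq ?_) (ENNReal.le_tsum v)
  rw [Measure.smul_apply, Measure.dirac_apply, smul_eq_mul]
  simp

lemma aux_ae_all {P : V → Prop} (h : ∀ᵐ v ∂G.measure, P v) : ∀ v, P v := by
  intro v
  by_contra hv
  have h1 : G.measure {v} = 0 :=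
    measure_mono_null (by simpa [Set.singleton_subset_iff] using hv) h
  have h2 := G.aux_measure_singleton v
  rw [h1] at h2
  exact absurd (le_antisymm h2 (by positivity)).symm
    (by simpa [ENNReal.ofReal_eq_zero, not_le] using G.aux_deg_pos v)

lemma aux_hasSum_integral (F : V → ℝ) (hF : Integrable F G.measure) :
    HasSum (fun v => G.deg v * F v) (∫ v, F v ∂G.measure) := by
  have hF' : Integrable F (Measure.sum fun v => ENNReal.ofReal (G.deg v) • Measure.dirac v) := by
    rw [← SummableWeightedGraph.measure]; exact hF
  have h := MeasureTheory.hasSum_integral_measure (f := F)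
    (μ := fun v : V => ENNReal.ofReal (G.deg v) • Measure.dirac v) hF'
  have heq : ∀ v : V, (∫ x, F x ∂(ENNReal.ofReal (G.deg v) • Measure.dirac v))
      = G.deg v * F v := by
    intro v
    rw [integral_smul_measure, integral_dirac, ENNReal.toReal_ofReal (G.aux_deg_nonneg v),
      smul_eq_mul]
  rw [show (∫ v, F v ∂G.measure)
      = ∫ x, F x ∂(Measure.sum fun v => ENNReal.ofReal (G.deg v) • Measure.dirac v) by
    rw [← SummableWeightedGraph.measure]]
  simpa only [heq] using h

lemma aux_inner_hasSum (f g : Lp ℝ 2 G.measure) :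
    HasSum (fun v => G.deg v * (f v * g v)) (inner ℝ f g : ℝ) := by
  have hint : Integrable (fun v => f v * g v) G.measure := by
    have h := MeasureTheory.L2.integrable_inner (𝕜 := ℝ) f g
    simpa [RCLike.inner_apply, conj_trivial, mul_comm] using h
  have h := G.aux_hasSum_integral _ hint
  have hinner : (inner ℝ f g : ℝ) = ∫ v, f v * g v ∂G.measure := by
    rw [MeasureTheory.L2.inner_def]
    congr 1
    funext v
    simp [RCLike.inner_apply, conj_trivial, mul_comm]
  rw [hinner]
  exact h

lemma aux_quad [Countable V] [Nontrivial V]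
    (Δ : Lp ℝ 2 G.measure →L[ℝ] Lp ℝ 2 G.measure) (hΔ : G.IsLaplacian Δ)
    (u : Lp ℝ 2 G.measure) :
    (inner ℝ (Δ u) u : ℝ) ≤ (1 + Real.sqrt (1 - (1 - G.dualCheegerConst) ^ 2)) * ‖u‖ ^ 2 := by
  have hUU := G.aux_inner_hasSum u u
  have hS2 : Summable fun v => G.deg v * (u v) ^ 2 :=
    hUU.summable.congr fun v => by ring
  have hW : (inner ℝ u u : ℝ) = ∑' v, G.deg v * (u v) ^ 2 := by
    rw [← hUU.tsum_eq]
    exact tsum_congr fun v => by ring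
  have hnorm : (inner ℝ u u : ℝ) = ‖u‖ ^ 2 := real_inner_self_eq_norm_sq u
  have hpt : ∀ v, (Δ u) v = u v - (G.deg v)⁻¹ * ∑' w, G.m v w * u w := G.aux_ae_all (hΔ u)
  have hDu := G.aux_inner_hasSum (Δ u) u
  have hsub : Summable fun v => (u v) * (∑' w, G.m v w * u w) := by
    have h1 : (fun v => (u v) * (∑' w, G.m v w * u w))
        = fun v => G.deg v * (u v) ^ 2 - G.deg v * ((Δ u) v * u v) := by
      funext v
      rw [hpt v]
      have hd := (G.aux_deg_pos v).ne'
      field_simp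
      ring
    rw [h1]
    exact hS2.sub hDu.summable
  have hSpair : (∑' p : V × V, G.m p.1 p.2 * u p.1 * u p.2)
      = ∑' v, (u v) * (∑' w, G.m v w * u w) := by
    rw [Summable.tsum_prod' (G.aux_SS (⇑u) hS2) fun v => (G.aux_SS (⇑u) hS2).prod_factor v]
    refine tsum_congr fun v => ?_
    rw [← tsum_mul_left]
    exact tsum_congr fun w => by ring
  have hDu_eq : (inner ℝ (Δ u) u : ℝ)
      = (∑' v, G.deg v * (u v) ^ 2) - ∑' p : V × V, G.m p.1 p.2 * u p.1 * u p.2 := by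
    rw [← hDu.tsum_eq, hSpair,
      show (fun v => G.deg v * ((Δ u) v * u v))
        = fun v => G.deg v * (u v) ^ 2 - (u v) * (∑' w, G.m v w * u w) from funext fun v => by
      rw [hpt v]; have hd := (G.aux_deg_pos v).ne'; field_simp]
    exact Summable.tsum_sub hS2 hsub
  rw [hDu_eq, show ‖u‖ ^ 2 = ∑' v, G.deg v * (u v) ^ 2 from by rw [← hnorm, hW]]
  exact G.aux_core (⇑u) hS2

end Operator

end SummableWeightedGraph

open SummableWeightedGraph in
/-- `λ_top(Δ) ≤ 1 + √(1 - (1 - h̄(G,m))²)`. -/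
theorem top_le_dualCheeger_bound {V : Type*} [MeasurableSpace V]
    [MeasurableSingletonClass V] [Countable V] [Nontrivial V] (G : SummableWeightedGraph V)
    (Δ : Lp ℝ 2 G.measure →L[ℝ] Lp ℝ 2 G.measure) (hΔ : G.IsLaplacian Δ) :
    sSup (spectrum ℝ Δ) ≤ 1 + Real.sqrt (1 - (1 - G.dualCheegerConst) ^ 2) := by
  refine Real.sSup_le (fun lam hlam => ?_) (by positivity)
  by_contra hgt
  push_neg at hgt
  rw [spectrum.mem_iff] at hlam
  apply hlam
  set c := 1 + Real.sqrt (1 - (1 - G.dualCheegerConst) ^ 2) with hc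
  set A := algebraMap ℝ (Lp ℝ 2 G.measure →L[ℝ] Lp ℝ 2 G.measure) lam - Δ with hA
  have hA_apply : ∀ u : Lp ℝ 2 G.measure, A u = lam • u - Δ u := fun u => by
    rw [hA]
    simp [Algebra.algebraMap_eq_smul_one]
  have hlamc : 0 < lam - c := by linarith
  have hcoerc : ∀ u : Lp ℝ 2 G.measure, (lam - c) * (‖u‖ * ‖u‖) ≤ (inner ℝ (A u) u : ℝ) := by
    intro u
    rw [hA_apply, inner_sub_left, real_inner_smul_left]
    have h1 := G.aux_quad Δ hΔ u
    rw [← hc] at h1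
    have h2 : (inner ℝ u u : ℝ) = ‖u‖ ^ 2 := real_inner_self_eq_norm_sq u
    rw [h2]
    nlinarith [h1, sq_nonneg ‖u‖]
  have hbb : ∀ u : Lp ℝ 2 G.measure, (lam - c) * ‖u‖ ≤ ‖A u‖ := by
    intro u
    by_cases hu : ‖u‖ = 0
    · rw [hu, mul_zero]
      positivity
    · have hupos : 0 < ‖u‖ := lt_of_le_of_ne (norm_nonneg u) (Ne.symm hu)
      have h3 : (lam - c) * (‖u‖ * ‖u‖) ≤ ‖A u‖ * ‖u‖ :=
        (hcoerc u).trans (real_inner_le_norm (A u) u)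
      nlinarith [h3, hupos]
  have hanti : AntilipschitzWith ((lam - c)⁻¹).toNNReal A := by
    refine ContinuousLinearMap.antilipschitz_of_bound A fun x => ?_
    rw [Real.coe_toNNReal _ (inv_nonneg.mpr hlamc.le)]
    have h := mul_le_mul_of_nonneg_left (hbb x) (inv_nonneg.mpr hlamc.le)
    rwa [inv_mul_cancel_left₀ hlamc.ne'] at h
  have hker : LinearMap.ker (A : Lp ℝ 2 G.measure →ₗ[ℝ] Lp ℝ 2 G.measure) = ⊥ := by
    rw [LinearMap.ker_eq_bot]
    exact hanti.injective
  have hclosed : IsClosed (LinearMap.range (A : Lp ℝ 2 G.measure →ₗ[ℝ] Lp ℝ 2 G.measure) : Set (Lp ℝ 2 G.measure)) :=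
    hanti.isClosed_range A.uniformContinuous
  have hrange : LinearMap.range (A : Lp ℝ 2 G.measure →ₗ[ℝ] Lp ℝ 2 G.measure) = ⊤ := by
    haveI := hclosed.completeSpace_coe
    rw [← (LinearMap.range (A : Lp ℝ 2 G.measure →ₗ[ℝ] Lp ℝ 2 G.measure)).orthogonal_orthogonal, Submodule.eq_top_iff']
    intro v w mem_w_orthogonal
    obtain rfl : w = 0 := by
      rw [← norm_eq_zero, ← mul_self_eq_zero, ← mul_right_inj' hlamc.ne', mul_zero, ← mul_assoc]
      apply le_antisymm
      · calc (lam - c) * ‖w‖ * ‖w‖ ≤ (inner ℝ (A w) w : ℝ) := by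
              rw [mul_assoc]; exact hcoerc w
          _ = 0 := mem_w_orthogonal _ ⟨w, rfl⟩
      · positivity
    exact inner_zero_left _
  exact ⟨(ContinuousLinearEquiv.ofBijective A hker hrange).toUnit, rfl⟩
end

section
/- (Co-area formulae.) Let (G,m) be a summable weighted graph and for g : V → ℝ and t ∈ ℝ write P_t(g) = {v ∈ V : g(v) > t}. Then for every f ∈ L²(G,m): (a) ∫₀^∞ m(P_t(f²)) dt = ∑_{v ∈ V} m(v)·f(v)², and (b) ∫₀^∞ m(∂P_t(f²)) dt = (1/2)·∑_{(u,v) ∈ V×V} m(u,v)·|f(u)² − f(v)²| (the right-hand side being the sum over edges uv of m(u,v)·|f(u)² − f(v)²|). -/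
open MeasureTheory
open scoped ENNReal

open SummableWeightedGraph


lemma ofReal_sub_add_ofReal_sub (a b : ℝ) :
    ENNReal.ofReal (a - b) + ENNReal.ofReal (b - a) = ENNReal.ofReal |a - b| := by
  rcases le_total a b with h | h
  · rw [ENNReal.ofReal_of_nonpos (by linarith), abs_of_nonpos (by linarith), zero_add, neg_sub]
  · rw [ENNReal.ofReal_of_nonpos (show b - a ≤ 0 by linarith), abs_of_nonneg (by linarith),
      add_zero]

lemma lintegral_indicator_Iio (c : ℝ≥0∞) (a : ℝ) (ha : 0 ≤ a) :
    ∫⁻ t in Set.Ioi (0 : ℝ), (Set.Iio a).indicator (fun _ => c) t = c * ENNReal.ofReal a := by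
  rw [lintegral_indicator measurableSet_Iio, setLIntegral_const,
    Measure.restrict_apply measurableSet_Iio, Set.Iio_inter_Ioi, Real.volume_Ioo, sub_zero]

lemma lintegral_indicator_Ico (c : ℝ≥0∞) (a b : ℝ) (hb : 0 ≤ b) :
    ∫⁻ t in Set.Ioi (0 : ℝ), (Set.Ico b a).indicator (fun _ => c) t
      = c * ENNReal.ofReal (a - b) := by
  rw [lintegral_indicator measurableSet_Ico, setLIntegral_const,
    Measure.restrict_apply measurableSet_Ico]
  congr 1
  apply le_antisymm
  · exact (measure_mono Set.inter_subset_left).trans_eq Real.volume_Ico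
  · rw [← Real.volume_Ioo (a := b) (b := a)]
    exact measure_mono fun x hx => ⟨⟨hx.1.le, hx.2⟩, lt_of_le_of_lt hb hx.1⟩

lemma coarea_aux {V : Type*} [Countable V] (G : SummableWeightedGraph V)
    (g : V → ℝ) (hg : ∀ v, 0 ≤ g v) :
    (∫ t in Set.Ioi (0 : ℝ), G.setWeight {v : V | t < g v}) = ∑' v : V, G.deg v * g v ∧
    (∫ t in Set.Ioi (0 : ℝ), G.boundaryWeight {v : V | t < g v})
        = (1 / 2) * ∑' q : V × V, G.m q.1 q.2 * |g q.1 - g q.2| := by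
  classical
  set M : V × V → ℝ≥0∞ := fun p => ENNReal.ofReal (G.m p.1 p.2) with hMdef
  have hMtot : ∑' p : V × V, M p = ENNReal.ofReal (∑' p : V × V, G.m p.1 p.2) :=
    (ENNReal.ofReal_tsum_of_nonneg (fun p => G.nonneg _ _) G.summable).symm
  have hMtop : ∑' p : V × V, M p ≠ ⊤ := by rw [hMtot]; exact ENNReal.ofReal_ne_top
  have hdeg0 : ∀ v, 0 ≤ G.deg v := fun v => tsum_nonneg fun u => G.nonneg _ _
  have hDeq : ∀ v, ENNReal.ofReal (G.deg v) = ∑' u, M (v, u) := by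
    intro v
    exact ENNReal.ofReal_tsum_of_nonneg (fun u => G.nonneg _ _)
      (((summable_prod_of_nonneg (fun p => G.nonneg _ _)).mp G.summable).1 v)
  have hDtot : ∑' v, ENNReal.ofReal (G.deg v) = ∑' p : V × V, M p := by
    simp_rw [hDeq]
    exact (ENNReal.tsum_prod' (f := M)).symm
  have hDtop : ∑' v, ENNReal.ofReal (G.deg v) ≠ ⊤ := hDtot ▸ hMtop
  -- setWeight in ENNReal
  have hsetW : ∀ S : Set V, ENNReal.ofReal (G.setWeight S)
      = ∑' v, S.indicator (fun v => ENNReal.ofReal (G.deg v)) v := by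
    intro S
    have h1 : ∑' v, S.indicator (fun v => ENNReal.ofReal (G.deg v)) v
        = ∑' v : S, ENNReal.ofReal (G.deg v) := (tsum_subtype S _).symm
    have hfin : ∑' v : S, ENNReal.ofReal (G.deg v) ≠ ⊤ := by
      refine ne_top_of_le_ne_top hDtop ?_
      rw [← h1]
      exact ENNReal.tsum_le_tsum fun v => Set.indicator_le_self _ _ v
    have h2 : G.setWeight S = (∑' v : S, ENNReal.ofReal (G.deg v)).toReal := by
      rw [ENNReal.tsum_toReal_eq (fun _ => ENNReal.ofReal_ne_top)]
      show (∑' v : S, G.deg v) = _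
      exact tsum_congr fun v => (ENNReal.toReal_ofReal (hdeg0 v)).symm
    rw [h2, ENNReal.ofReal_toReal hfin, h1]
  -- boundaryWeight in ENNReal
  have hbW : ∀ S : Set V, ENNReal.ofReal (G.boundaryWeight S)
      = ∑' p : V × V, (S ×ˢ Sᶜ).indicator M p := by
    intro S
    have h1 : ∑' p : V × V, (S ×ˢ Sᶜ).indicator M p
        = ∑' q : ↥(S ×ˢ Sᶜ), M q := (tsum_subtype _ _).symm
    have h2 : ∑' q : ↥(S ×ˢ Sᶜ), M q = ∑' p : ↥S × ↥Sᶜ, M (↑p.1, ↑p.2) := by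
      rw [← (Equiv.Set.prod S Sᶜ).tsum_eq (f := fun p : ↥S × ↥Sᶜ => M (↑p.1, ↑p.2))]
      exact tsum_congr fun q => rfl
    have hfin : ∑' p : ↥S × ↥Sᶜ, M (↑p.1, ↑p.2) ≠ ⊤ := by
      refine ne_top_of_le_ne_top hMtop ?_
      rw [← h2, ← h1]
      exact ENNReal.tsum_le_tsum fun p => Set.indicator_le_self _ _ p
    have h3 : G.boundaryWeight S = (∑' p : ↥S × ↥Sᶜ, M (↑p.1, ↑p.2)).toReal := by
      rw [ENNReal.tsum_toReal_eq (fun _ => ENNReal.ofReal_ne_top)]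
      show (∑' p : ↥S × ↥Sᶜ, G.m p.1 p.2) = _
      exact tsum_congr fun p => (ENNReal.toReal_ofReal (G.nonneg _ _)).symm
    rw [h3, ENNReal.ofReal_toReal hfin, h1, h2]
  have hsw0 : ∀ S : Set V, 0 ≤ G.setWeight S := fun S => tsum_nonneg fun v => hdeg0 v
  have hbw0 : ∀ S : Set V, 0 ≤ G.boundaryWeight S := fun S => tsum_nonneg fun p => G.nonneg _ _
  constructor
  · -- part (a)
    have hAind : ∀ t : ℝ, ENNReal.ofReal (G.setWeight {v | t < g v})
        = ∑' v, (Set.Iio (g v)).indicator (fun _ => ENNReal.ofReal (G.deg v)) t := by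
      intro t
      rw [hsetW]
      exact tsum_congr fun v => by
        by_cases h : t < g v <;> simp [Set.indicator_apply, h]
    have hEmeas : Measurable fun t =>
        ∑' v, (Set.Iio (g v)).indicator (fun _ => ENNReal.ofReal (G.deg v)) t :=
      Measurable.ennreal_tsum fun v => measurable_const.indicator measurableSet_Iio
    have haesm : AEStronglyMeasurable (fun t => G.setWeight {v | t < g v})
        (volume.restrict (Set.Ioi (0 : ℝ))) := by
      have heq : (fun t => G.setWeight {v | t < g v}) = fun t =>
          (∑' v, (Set.Iio (g v)).indicator (fun _ => ENNReal.ofReal (G.deg v)) t).toReal := by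
        funext t; rw [← hAind t, ENNReal.toReal_ofReal (hsw0 _)]
      rw [heq]
      exact hEmeas.ennreal_toReal.aestronglyMeasurable
    rw [integral_eq_lintegral_of_nonneg_ae (ae_of_all _ fun t => hsw0 _) haesm]
    have hlint : (∫⁻ t in Set.Ioi (0 : ℝ), ENNReal.ofReal (G.setWeight {v | t < g v}))
        = ∑' v, ENNReal.ofReal (G.deg v) * ENNReal.ofReal (g v) := by
      rw [lintegral_congr hAind,
        lintegral_tsum fun v => (measurable_const.indicator measurableSet_Iio).aemeasurable]
      exact tsum_congr fun v => lintegral_indicator_Iio _ _ (hg v)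
    rw [hlint, ENNReal.tsum_toReal_eq
      (fun v => ENNReal.mul_ne_top ENNReal.ofReal_ne_top ENNReal.ofReal_ne_top)]
    exact tsum_congr fun v => by
      rw [ENNReal.toReal_mul, ENNReal.toReal_ofReal (hdeg0 v), ENNReal.toReal_ofReal (hg v)]
  · -- part (b)
    have hBind : ∀ t : ℝ, ENNReal.ofReal (G.boundaryWeight {v | t < g v})
        = ∑' p : V × V, (Set.Ico (g p.2) (g p.1)).indicator (fun _ => M p) t := by
      intro t
      rw [hbW]
      refine tsum_congr fun p => ?_
      by_cases h1 : t < g p.1 <;> by_cases h2 : g p.2 ≤ t <;>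
        simp [Set.indicator_apply, Set.mem_prod, Set.mem_compl_iff, Set.mem_setOf_eq,
          Set.mem_Ico, h1, h2, not_lt]
    have hEmeas : Measurable fun t =>
        ∑' p : V × V, (Set.Ico (g p.2) (g p.1)).indicator (fun _ => M p) t :=
      Measurable.ennreal_tsum fun p => measurable_const.indicator measurableSet_Ico
    have haesm : AEStronglyMeasurable (fun t => G.boundaryWeight {v | t < g v})
        (volume.restrict (Set.Ioi (0 : ℝ))) := by
      have heq : (fun t => G.boundaryWeight {v | t < g v}) = fun t =>
          (∑' p : V × V, (Set.Ico (g p.2) (g p.1)).indicator (fun _ => M p) t).toReal := by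
        funext t; rw [← hBind t, ENNReal.toReal_ofReal (hbw0 _)]
      rw [heq]
      exact hEmeas.ennreal_toReal.aestronglyMeasurable
    rw [integral_eq_lintegral_of_nonneg_ae (ae_of_all _ fun t => hbw0 _) haesm]
    have hlint : (∫⁻ t in Set.Ioi (0 : ℝ), ENNReal.ofReal (G.boundaryWeight {v | t < g v}))
        = ∑' p : V × V, M p * ENNReal.ofReal (g p.1 - g p.2) := by
      rw [lintegral_congr hBind,
        lintegral_tsum fun p => (measurable_const.indicator measurableSet_Ico).aemeasurable]
      exact tsum_congr fun p => lintegral_indicator_Ico _ _ _ (hg p.2)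
    have hswap : (∑' p : V × V, M p * ENNReal.ofReal (g p.2 - g p.1))
        = ∑' p : V × V, M p * ENNReal.ofReal (g p.1 - g p.2) := by
      calc (∑' p : V × V, M p * ENNReal.ofReal (g p.2 - g p.1))
          = ∑' p : V × V, (fun q : V × V => M q * ENNReal.ofReal (g q.1 - g q.2))
              ((Equiv.prodComm V V) p) := by
            refine tsum_congr fun p => ?_
            obtain ⟨u, v⟩ := p
            simp only [Equiv.prodComm_apply, Prod.swap_prod_mk, hMdef]
            rw [G.symm u v]
        _ = ∑' p : V × V, M p * ENNReal.ofReal (g p.1 - g p.2) :=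
              (Equiv.prodComm V V).tsum_eq fun q : V × V => M q * ENNReal.ofReal (g q.1 - g q.2)
    have hhalf : (∑' p : V × V, M p * ENNReal.ofReal (g p.1 - g p.2))
          + (∑' p : V × V, M p * ENNReal.ofReal (g p.2 - g p.1))
        = ∑' p : V × V, M p * ENNReal.ofReal |g p.1 - g p.2| := by
      rw [← ENNReal.tsum_add]
      exact tsum_congr fun p => by rw [← mul_add, ofReal_sub_add_ofReal_sub]
    have hrhs : (∑' q : V × V, G.m q.1 q.2 * |g q.1 - g q.2|)
        = (∑' p : V × V, M p * ENNReal.ofReal |g p.1 - g p.2|).toReal := by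
      rw [ENNReal.tsum_toReal_eq
        (fun p => ENNReal.mul_ne_top ENNReal.ofReal_ne_top ENNReal.ofReal_ne_top)]
      exact tsum_congr fun p => by
        rw [ENNReal.toReal_mul, ENNReal.toReal_ofReal (G.nonneg _ _),
          ENNReal.toReal_ofReal (abs_nonneg _)]
    rw [hlint, hrhs, ← hhalf, hswap, ← two_mul, ENNReal.toReal_mul]
    norm_num
    ring

/-- co-area formulae. -/
theorem coarea_formulae {V : Type*} [MeasurableSpace V] [MeasurableSingletonClass V]
    [Countable V] [Nonempty V] (G : SummableWeightedGraph V) (f : Lp ℝ 2 G.measure) :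
    (∫ t in Set.Ioi (0 : ℝ), G.setWeight {v : V | t < (f v) ^ 2})
        = ∑' v : V, G.deg v * (f v) ^ 2 ∧
    (∫ t in Set.Ioi (0 : ℝ), G.boundaryWeight {v : V | t < (f v) ^ 2})
        = (1 / 2) * ∑' q : V × V, G.m q.1 q.2 * |(f q.1) ^ 2 - (f q.2) ^ 2| :=
  coarea_aux G (fun v => (f v) ^ 2) (fun v => sq_nonneg _)
end

section
/- Let (G,m) be a summable weighted graph and let ψ : V → {1,−1} be any function. Let T_ψ : L²(G,m) → L²(G,m) be the (self-inverse, bounded) multiplication operator (T_ψ f)(v) = ψ(v)·f(v), and let P_ψ : L²(G,m) → L²(G,m) be the bounded operator (P_ψ f)(v) = (1/m(v))·∑_{u : ψ(u) = ψ(v)} m(v,u)·f(u). Then T_ψ ∘ Δ ∘ T_ψ = 2·I − Δ − 2·P_ψ, and consequently σ(Δ) = σ(2·I − Δ − 2·P_ψ). -/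
open MeasureTheory

section Aux

open SummableWeightedGraph ENNReal

variable {V : Type*} [MeasurableSpace V] [MeasurableSingletonClass V]
  (G : SummableWeightedGraph V)

lemma swg_deg_pos (v : V) : 0 < G.deg v := G.noIsolated v

lemma swg_singleton_pos (v : V) : 0 < G.measure {v} := by
  have h1 : (ENNReal.ofReal (G.deg v) • Measure.dirac v) {v} ≤ G.measure {v} :=
    Measure.le_iff'.mp (Measure.le_sum _ v) {v}
  have h2 : (ENNReal.ofReal (G.deg v) • Measure.dirac v) {v} = ENNReal.ofReal (G.deg v) := by
    simp [Measure.smul_apply, Measure.dirac_apply]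
  refine lt_of_lt_of_le ?_ h1
  rw [h2]
  exact ENNReal.ofReal_pos.mpr (swg_deg_pos G v)

lemma swg_ae_all {p : V → Prop} (h : ∀ᵐ v ∂G.measure, p v) : ∀ v, p v := by
  intro v
  by_contra hv
  have h0 : G.measure {x | ¬ p x} = 0 := by rwa [MeasureTheory.ae_iff] at h
  have hle : G.measure {v} ≤ G.measure {x | ¬ p x} :=
    measure_mono (by simpa using hv)
  have := lt_of_lt_of_le (swg_singleton_pos G v) hle
  rw [h0] at this
  exact lt_irrefl 0 this

lemma swg_m_le_deg (v u : V) : G.m v u ≤ G.deg u := by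
  rw [G.symm]
  exact Summable.le_tsum (G.summable.prod_factor u) v fun w _ => G.nonneg u w

variable [Countable V]

lemma swg_summable_weight_sq (f : Lp ℝ 2 G.measure) :
    Summable fun u => G.deg u * (f u) ^ 2 := by
  have hint : Integrable (fun x => (f x) ^ 2) G.measure := (Lp.memLp f).integrable_sq
  have hfin : ∫⁻ x, (‖(f x) ^ 2‖₊ : ℝ≥0∞) ∂G.measure < ⊤ := hint.2
  have hcalc : ∫⁻ x, (‖(f x) ^ 2‖₊ : ℝ≥0∞) ∂G.measure
      = ∑' v, ENNReal.ofReal (G.deg v) * (‖(f v) ^ 2‖₊ : ℝ≥0∞) := by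
    simp only [SummableWeightedGraph.measure]
    rw [lintegral_sum_measure]
    exact tsum_congr fun v => by rw [lintegral_smul_measure, lintegral_dirac, smul_eq_mul]
  rw [hcalc] at hfin
  have hs := ENNReal.summable_toReal hfin.ne
  refine hs.congr fun v => ?_
  rw [ENNReal.toReal_mul, ENNReal.toReal_ofReal (swg_deg_pos G v).le, ENNReal.coe_toReal,
    coe_nnnorm, Real.norm_eq_abs, abs_of_nonneg (sq_nonneg _)]

lemma swg_summable_mul (f : Lp ℝ 2 G.measure) (v : V) :
    Summable fun u => G.m v u * f u := by
  apply Summable.of_abs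
  refine Summable.of_nonneg_of_le (fun u => abs_nonneg _) (fun u => ?_)
    (((G.summable.prod_factor v).add (swg_summable_weight_sq G f)).div_const 2)
  have hm : 0 ≤ G.m v u := G.nonneg v u
  have hmd : G.m v u ≤ G.deg u := swg_m_le_deg G v u
  rw [abs_mul, abs_of_nonneg hm]
  have h1 : 0 ≤ G.m v u * (|f u| - 1) ^ 2 := mul_nonneg hm (sq_nonneg _)
  have h2 : 0 ≤ (G.deg u - G.m v u) * (f u) ^ 2 :=
    mul_nonneg (sub_nonneg.mpr hmd) (sq_nonneg _)
  have h3 : |f u| ^ 2 = (f u) ^ 2 := sq_abs _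
  nlinarith [abs_nonneg (f u)]

end Aux

open SummableWeightedGraph in
/-- `Tψ ∘ Δ ∘ Tψ = 2·I - Δ - 2·Pψ`, hence
`σ(Δ) = σ(2·I - Δ - 2·Pψ)`. -/
theorem conjugated_laplacian {V : Type*} [MeasurableSpace V] [MeasurableSingletonClass V]
    [Countable V] [Nonempty V] (G : SummableWeightedGraph V)
    (ψ : V → ℝ) (hψ : ∀ v, ψ v = 1 ∨ ψ v = -1)
    (Δ T P : Lp ℝ 2 G.measure →L[ℝ] Lp ℝ 2 G.measure)
    (hΔ : G.IsLaplacian Δ)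
    (hT : ∀ f : Lp ℝ 2 G.measure, ∀ᵐ v ∂G.measure, T f v = ψ v * f v)
    (hP : ∀ f : Lp ℝ 2 G.measure, ∀ᵐ v ∂G.measure,
      P f v = (G.deg v)⁻¹ * ∑' u : {u : V // ψ u = ψ v}, G.m v u * f u) :
    T.comp (Δ.comp T)
        = (2 : ℝ) • (1 : Lp ℝ 2 G.measure →L[ℝ] Lp ℝ 2 G.measure) - Δ - (2 : ℝ) • P ∧
    spectrum ℝ Δ
        = spectrum ℝ
          ((2 : ℝ) • (1 : Lp ℝ 2 G.measure →L[ℝ] Lp ℝ 2 G.measure) - Δ - (2 : ℝ) • P) := by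
  have hTall : ∀ g : Lp ℝ 2 G.measure, ∀ v, T g v = ψ v * g v :=
    fun g => swg_ae_all G (hT g)
  have hΔall : ∀ g : Lp ℝ 2 G.measure, ∀ v,
      Δ g v = g v - (G.deg v)⁻¹ * ∑' u, G.m v u * g u :=
    fun g => swg_ae_all G (hΔ g)
  have hPall : ∀ g : Lp ℝ 2 G.measure, ∀ v,
      P g v = (G.deg v)⁻¹ * ∑' u : {u : V // ψ u = ψ v}, G.m v u * g u :=
    fun g => swg_ae_all G (hP g)
  have hsq : ∀ v, ψ v * ψ v = 1 := by
    intro v; rcases hψ v with h | h <;> rw [h] <;> norm_num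
  -- Part 1: the operator identity
  have hmain : T.comp (Δ.comp T)
      = (2 : ℝ) • (1 : Lp ℝ 2 G.measure →L[ℝ] Lp ℝ 2 G.measure) - Δ - (2 : ℝ) • P := by
    ext f
    have hrhs : ((2 : ℝ) • (1 : Lp ℝ 2 G.measure →L[ℝ] Lp ℝ 2 G.measure) - Δ - (2 : ℝ) • P) f
        = (2 : ℝ) • f - Δ f - (2 : ℝ) • (P f) := by
      simp [ContinuousLinearMap.sub_apply, ContinuousLinearMap.smul_apply]
    rw [hrhs]
    filter_upwards [Lp.coeFn_sub ((2 : ℝ) • f - Δ f) ((2 : ℝ) • (P f)),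
      Lp.coeFn_sub ((2 : ℝ) • f) (Δ f), Lp.coeFn_smul (2 : ℝ) f,
      Lp.coeFn_smul (2 : ℝ) (P f)] with v e1 e2 e3 e4
    rw [ContinuousLinearMap.comp_apply, ContinuousLinearMap.comp_apply, e1, Pi.sub_apply, e2,
      Pi.sub_apply, e3, e4, Pi.smul_apply, Pi.smul_apply, smul_eq_mul, smul_eq_mul]
    set S : Set V := {u | ψ u = ψ v} with hS
    set g : V → ℝ := fun u => G.m v u * f u with hgdef
    have hg : Summable g := swg_summable_mul G f v
    have hind : Summable (S.indicator g) := hg.indicator S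
    have hsub : (∑' u : {u : V // ψ u = ψ v}, G.m v u * f u) = ∑' u, S.indicator g u :=
      tsum_subtype S g
    have hprod : ∀ u, ψ v * (G.m v u * (ψ u * f u)) = 2 * S.indicator g u - g u := by
      intro u
      by_cases h : ψ u = ψ v
      · rw [Set.indicator_of_mem (by exact h : u ∈ S), h]
        have := hsq v
        linear_combination G.m v u * f u * this
      · rw [Set.indicator_of_notMem (by exact h : u ∉ S)]
        have hp : ψ v * ψ u = -1 := by
          rcases hψ v with h1 | h1 <;> rcases hψ u with h2 | h2 <;>
            first
              | (exact absurd (h2.trans h1.symm) h)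
              | (rw [h1, h2]; norm_num)
        linear_combination G.m v u * f u * hp
    have hkey : ψ v * ∑' u, G.m v u * (ψ u * f u)
        = 2 * (∑' u, S.indicator g u) - ∑' u, g u := by
      rw [← tsum_mul_left, tsum_congr hprod,
        Summable.tsum_sub (hind.mul_left 2) hg, tsum_mul_left]
    have ht1 : (∑' u, G.m v u * (T f) u) = ∑' u, G.m v u * (ψ u * f u) :=
      tsum_congr fun u => by rw [hTall f u]
    rw [hTall (Δ (T f)) v, hΔall (T f) v, hTall f v, ht1, hΔall f v, hPall f v, hsub]
    have h1 := hsq v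
    linear_combination f v * h1 - (G.deg v)⁻¹ * hkey
  refine ⟨hmain, ?_⟩
  -- Part 2: the spectrum identity
  have hTT : T * T = 1 := by
    ext f
    refine Filter.Eventually.of_forall fun v => ?_
    show (T (T f)) v = f v
    rw [hTall (T f) v, hTall f v, ← mul_assoc, hsq v, one_mul]
  let u : (Lp ℝ 2 G.measure →L[ℝ] Lp ℝ 2 G.measure)ˣ := ⟨T, T, hTT, hTT⟩
  have hconj : (↑u * Δ * ↑u⁻¹ : Lp ℝ 2 G.measure →L[ℝ] Lp ℝ 2 G.measure)
      = T.comp (Δ.comp T) := by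
    ext f; rfl
  have h2 := spectrum.units_conjugate (R := ℝ) (a := Δ) (u := u)
  rw [hconj, hmain] at h2
  exact h2.symm
end

section
/- Let (K,m) be the infinite complete graph with weights m(i,j) = p_i·p_j, and let P be its random-walk operator. A real number λ with λ ≠ α_j for all j ≥ 1 is an eigenvalue of P if and only if both: (i) the series ∑_{j=1}^∞ α_j/(α_j − λ) converges to 1, and (ii) ∑_{j=1}^∞ p_j/(λ − α_j)² < ∞. -/
open MeasureTheory

/-- `lam` is an eigenvalue of the bounded operator `T`. -/
def IsEigenvalue {H : Type*} [NormedAddCommGroup H] [NormedSpace ℝ H]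
    (T : H →L[ℝ] H) (lam : ℝ) : Prop :=
  ∃ f : H, f ≠ 0 ∧ T f = lam • f

/-- The quantities `αᵢ = -pᵢ/(1-pᵢ)` attached to the infinite complete graph. -/
noncomputable def alpha (p : ℕ → ℝ) (j : ℕ) : ℝ := -p j / (1 - p j)

section Aux

open SummableWeightedGraph

/-- Singleton measures. -/
lemma graph_measure_singleton (G : SummableWeightedGraph ℕ) (v : ℕ) :
    G.measure {v} = ENNReal.ofReal (G.deg v) := by
  rw [SummableWeightedGraph.measure, Measure.sum_apply _ (MeasurableSet.singleton v)]
  have : ∀ u : ℕ, (ENNReal.ofReal (G.deg u) • Measure.dirac u) {v}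
      = if u = v then ENNReal.ofReal (G.deg v) else 0 := by
    intro u
    rw [Measure.smul_apply, smul_eq_mul, Measure.dirac_apply' _ (MeasurableSet.singleton v)]
    by_cases h : u = v
    · subst h; simp [Set.indicator_of_mem]
    · simp [Set.indicator_of_notMem, h]
  simp_rw [this]
  rw [tsum_eq_single v (fun u hu => by rw [if_neg hu])]
  rw [if_pos rfl]

/-- Almost everywhere = everywhere for the graph measure. -/
lemma graph_ae_all (G : SummableWeightedGraph ℕ) {Q : ℕ → Prop}
    (h : ∀ᵐ v ∂G.measure, Q v) : ∀ v, Q v := by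
  intro v
  by_contra hv
  have h0 : G.measure {x | ¬ Q x} = 0 := h
  have h1 : G.measure {v} ≤ G.measure {x | ¬ Q x} :=
    measure_mono (by intro x hx; simp only [Set.mem_singleton_iff] at hx; subst hx; exact hv)
  rw [graph_measure_singleton, h0, nonpos_iff_eq_zero, ENNReal.ofReal_eq_zero] at h1
  exact absurd h1 (not_le.2 (G.noIsolated v))

lemma graph_lintegral (G : SummableWeightedGraph ℕ) (g : ℕ → ENNReal) :
    ∫⁻ v, g v ∂G.measure = ∑' v, ENNReal.ofReal (G.deg v) * g v := by
  rw [SummableWeightedGraph.measure, lintegral_sum_measure]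
  simp [lintegral_smul_measure, lintegral_dirac]

lemma tsum_ofReal_lt_top_iff {a : ℕ → ℝ} (ha : ∀ v, 0 ≤ a v) :
    (∑' v, ENNReal.ofReal (a v)) < ⊤ ↔ Summable a := by
  constructor
  · intro h
    have h2 := ENNReal.summable_toReal h.ne
    refine h2.congr fun v => ?_
    exact ENNReal.toReal_ofReal (ha v)
  · intro h
    rw [← ENNReal.ofReal_tsum_of_nonneg ha h]
    exact ENNReal.ofReal_lt_top

/-- Membership in `L²` of the graph measure is a summability condition. -/
lemma graph_memLp_iff (G : SummableWeightedGraph ℕ) (f : ℕ → ℝ) :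
    MemLp f 2 G.measure ↔ Summable (fun v => G.deg v * f v ^ 2) := by
  have hm : AEStronglyMeasurable f G.measure :=
    (Measurable.of_discrete (f := f)).aestronglyMeasurable
  rw [memLp_two_iff_integrable_sq hm]
  have hm2 : AEStronglyMeasurable (fun v => f v ^ 2) G.measure :=
    (Measurable.of_discrete (f := fun v => f v ^ 2)).aestronglyMeasurable
  have hnn : 0 ≤ᶠ[ae G.measure] fun v => f v ^ 2 :=
    Filter.Eventually.of_forall fun v => sq_nonneg _
  constructor
  · intro h
    have hfi := h.hasFiniteIntegral
    rw [hasFiniteIntegral_iff_ofReal hnn, graph_lintegral] at hfi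
    rw [show (∑' v, ENNReal.ofReal (G.deg v) * ENNReal.ofReal (f v ^ 2))
        = ∑' v, ENNReal.ofReal (G.deg v * f v ^ 2) from
      tsum_congr fun v => (ENNReal.ofReal_mul (G.noIsolated v).le).symm] at hfi
    exact (tsum_ofReal_lt_top_iff fun v =>
      mul_nonneg (G.noIsolated v).le (sq_nonneg _)).1 hfi
  · intro h
    refine ⟨hm2, ?_⟩
    rw [hasFiniteIntegral_iff_ofReal hnn, graph_lintegral]
    rw [show (∑' v, ENNReal.ofReal (G.deg v) * ENNReal.ofReal (f v ^ 2))
        = ∑' v, ENNReal.ofReal (G.deg v * f v ^ 2) from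
      tsum_congr fun v => (ENNReal.ofReal_mul (G.noIsolated v).le).symm]
    exact (tsum_ofReal_lt_top_iff fun v =>
      mul_nonneg (G.noIsolated v).le (sq_nonneg _)).2 h

end Aux

open SummableWeightedGraph in
/-- eigenvalue characterisation for the random-walk operator of the
infinite complete graph. -/
theorem eigenvalue_characterisation_complete_graph (p : ℕ → ℝ) (hp : ∀ i, 0 < p i)
    (hsum : HasSum p 1) (G : SummableWeightedGraph ℕ)
    (hG : ∀ i j, G.m i j = if i = j then 0 else p i * p j)
    (P : Lp ℝ 2 G.measure →L[ℝ] Lp ℝ 2 G.measure)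
    (hP : ∀ f : Lp ℝ 2 G.measure, ∀ᵐ v ∂G.measure,
      P f v = (G.deg v)⁻¹ * ∑' u, G.m v u * f u)
    (lam : ℝ) (hlam : ∀ j, lam ≠ alpha p j) :
    IsEigenvalue P lam ↔
      (HasSum (fun j => alpha p j / (alpha p j - lam)) 1 ∧
        Summable fun j => p j / (lam - alpha p j) ^ 2) := by
  -- basic bounds on p
  have hple : ∀ i j, i ≠ j → p i + p j ≤ 1 := by
    intro i j hij
    have h := sum_le_hasSum {i, j} (fun k _ => (hp k).le) hsum
    rwa [Finset.sum_pair hij] at h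
  set c : ℝ := min (p 0) (p 1) with hcdef
  have hcpos : 0 < c := lt_min (hp 0) (hp 1)
  have hqc : ∀ i, c ≤ 1 - p i := by
    intro i
    rcases eq_or_ne i 0 with rfl | hi
    · have := hple 0 1 (by norm_num)
      calc c ≤ p 1 := min_le_right _ _
        _ ≤ 1 - p 0 := by linarith
    · have := hple i 0 hi
      calc c ≤ p 0 := min_le_left _ _
        _ ≤ 1 - p i := by linarith
  have hq : ∀ i, 0 < 1 - p i := fun i => lt_of_lt_of_le hcpos (hqc i)
  have hq1 : ∀ i, 1 - p i ≤ 1 := fun i => by linarith [hp i]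
  -- the denominators
  have hden : ∀ i, lam * (1 - p i) + p i ≠ 0 := by
    intro i h
    apply hlam i
    rw [alpha, eq_div_iff (hq i).ne']
    linarith
  have hAj : ∀ j, lam - alpha p j = (lam * (1 - p j) + p j) / (1 - p j) := by
    intro j
    rw [alpha, neg_div, sub_neg_eq_add, eq_div_iff (hq j).ne', add_mul,
      div_mul_cancel₀ _ (hq j).ne']
  have hsub : ∀ j, alpha p j - lam ≠ 0 :=
    fun j => sub_ne_zero_of_ne fun h => hlam j h.symm
  -- vertex degrees
  have hdeg : ∀ v, G.deg v = p v * (1 - p v) := by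
    intro v
    have h1 : HasSum (fun u => p v * p u) (p v * 1) := hsum.mul_left _
    have h2 := h1.update v 0
    have h3 : Function.update (fun u => p v * p u) v 0 = fun u => G.m v u := by
      funext u
      rw [hG, Function.update_apply]
      by_cases h : u = v
      · simp [h]
      · rw [if_neg h, if_neg (fun h' : v = u => h h'.symm)]
    have h4 : G.deg v = ∑' u, G.m v u := rfl
    rw [h4, ← h3, h2.tsum_eq]
    ring
  have hdegpos : ∀ v, 0 < G.deg v := fun v => G.noIsolated v
  -- summability of p/(1-p)
  have hpq_sum : Summable (fun u => p u / (1 - p u)) := by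
    refine Summable.of_nonneg_of_le (fun u => div_nonneg (hp u).le (hq u).le)
      (fun u => ?_) (hsum.summable.mul_right c⁻¹)
    rw [div_eq_mul_inv]
    gcongr
    · exact (hp u).le
    · exact hqc u
  -- a helper algebraic inequality
  have key : ∀ (a b x : ℝ), 0 < a → 0 < b → a * |x| ≤ a / b + a * b * x ^ 2 := by
    intro a b x ha hb
    rw [div_add' _ _ _ hb.ne', le_div_iff₀ hb]
    rcases abs_cases x with ⟨h, _⟩ | ⟨h, _⟩ <;> rw [h] <;>
      nlinarith [mul_nonneg ha.le (sq_nonneg (b * x - 1)),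
        mul_nonneg ha.le (sq_nonneg (b * x + 1)), ha.le, hb.le,
        mul_nonneg (mul_nonneg ha.le hb.le) (sq_nonneg x)]
  have halpha : ∀ j, alpha p j / (alpha p j - lam) = p j / (lam * (1 - p j) + p j) := by
    intro j
    rw [div_eq_div_iff (hsub j) (hden j), alpha]
    field_simp [(hq j).ne']
    ring
  constructor
  · -- forward direction
    rintro ⟨f, hf0, hfeig⟩
    set F : ℕ → ℝ := fun v => (f : ℕ → ℝ) v with hFdef
    have hF2 : Summable (fun v => G.deg v * F v ^ 2) := (graph_memLp_iff G F).1 (Lp.memLp f)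
    have hSsum : Summable (fun u => p u * F u) := by
      refine Summable.of_abs ?_
      refine Summable.of_nonneg_of_le (fun u => abs_nonneg _) (fun u => ?_) (hpq_sum.add hF2)
      rw [abs_mul, abs_of_pos (hp u)]
      calc p u * |F u| ≤ p u / (1 - p u) + p u * (1 - p u) * F u ^ 2 :=
            key (p u) (1 - p u) (F u) (hp u) (hq u)
        _ = p u / (1 - p u) + G.deg u * F u ^ 2 := by rw [hdeg]
    set S : ℝ := ∑' u, p u * F u with hSdef
    have hSts : HasSum (fun u => p u * F u) S := hSsum.hasSum
    -- the pointwise eigenvalue equation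
    have heig : ∀ v, (G.deg v)⁻¹ * (∑' u, G.m v u * F u) = lam * F v := by
      have h1 := hP f
      rw [hfeig] at h1
      refine graph_ae_all G ?_
      filter_upwards [h1, Lp.coeFn_smul lam f] with v e1 e2
      rw [← e1, e2]
      simp [hFdef]
    have hsumv : ∀ v, ∑' u, G.m v u * F u = p v * S - p v * (p v * F v) := by
      intro v
      have h1 : HasSum (fun u => p v * (p u * F u)) (p v * S) := hSts.mul_left _
      have h2 := h1.update v 0
      have h3 : Function.update (fun u => p v * (p u * F u)) v 0
          = fun u => G.m v u * F u := by
        funext u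
        rw [hG, Function.update_apply]
        by_cases h : u = v
        · simp [h]
        · simp only [h, if_false]
          rw [if_neg (fun h' : v = u => h h'.symm)]
          ring
      rw [← h3, h2.tsum_eq]
      ring
    have heq : ∀ v, S = (lam * (1 - p v) + p v) * F v := by
      intro v
      have h := heig v
      rw [hsumv v, hdeg v, inv_mul_eq_div, div_eq_iff (by
        have := hdegpos v; rw [hdeg v] at this; exact this.ne')] at h
      have h2 : p v * S = p v * ((lam * (1 - p v) + p v) * F v) := by linear_combination h
      exact mul_left_cancel₀ (hp v).ne' h2
    obtain ⟨v0, hv0⟩ : ∃ v, F v ≠ 0 := by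
      by_contra h
      push_neg at h
      apply hf0
      refine Lp.ext ?_
      filter_upwards [Lp.coeFn_zero ℝ 2 G.measure] with v hv
      rw [hv]
      exact h v
    have hS0 : S ≠ 0 := by
      intro h
      rw [h] at heq
      rcases mul_eq_zero.1 (heq v0).symm with h1 | h1
      · exact hden v0 h1
      · exact hv0 h1
    have hFv : ∀ v, F v = S / (lam * (1 - p v) + p v) := by
      intro v
      rw [eq_div_iff (hden v)]
      linear_combination (heq v).symm
    constructor
    · -- condition (i)
      have h1 : HasSum (fun u => (p u * F u) * S⁻¹) (S * S⁻¹) := hSts.mul_right _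
      rw [mul_inv_cancel₀ hS0] at h1
      have h2 : (fun j => alpha p j / (alpha p j - lam)) = fun u => (p u * F u) * S⁻¹ := by
        funext j
        rw [halpha j, hFv j]
        field_simp [hden j, hS0]
      rw [h2]
      exact h1
    · -- condition (ii)
      have hratio : ∀ j, p j / (lam - alpha p j) ^ 2
          = (1 - p j) * ((S ^ 2)⁻¹ * (G.deg j * F j ^ 2)) := by
        intro j
        rw [hFv j, hdeg j, hAj j]
        rw [div_pow, div_pow]
        field_simp [hden j, (hq j).ne', hS0]
      have hgsum : Summable (fun j => (S ^ 2)⁻¹ * (G.deg j * F j ^ 2)) :=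
        hF2.mul_left _
      have hnn : ∀ j, (0:ℝ) ≤ (S ^ 2)⁻¹ * (G.deg j * F j ^ 2) := fun j =>
        mul_nonneg (by positivity) (mul_nonneg (hdegpos j).le (sq_nonneg _))
      refine Summable.of_nonneg_of_le (fun j => ?_) (fun j => ?_) hgsum
      · rw [hratio j]
        exact mul_nonneg (hq j).le (hnn j)
      · rw [hratio j]
        exact mul_le_of_le_one_left (hnn j) (hq1 j)
  · -- backward direction
    rintro ⟨hi, hii⟩
    set F : ℕ → ℝ := fun v => (lam * (1 - p v) + p v)⁻¹ with hFdef
    have hF0 : ∀ v, F v ≠ 0 := fun v => inv_ne_zero (hden v)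
    have hFmem : MemLp F 2 G.measure := by
      rw [graph_memLp_iff]
      refine Summable.of_nonneg_of_le (fun v => ?_) (fun v => ?_) (hii.mul_left c⁻¹)
      · rw [hdeg]
        exact mul_nonneg (mul_nonneg (hp v).le (hq v).le) (sq_nonneg _)
      · have hratio2 : G.deg v * F v ^ 2
            = (1 - p v)⁻¹ * (p v / (lam - alpha p v) ^ 2) := by
          rw [hdeg, hAj v]
          simp only [hFdef]
          rw [div_pow]
          field_simp [hden v, (hq v).ne']
        rw [hratio2]
        have hX : (0:ℝ) ≤ p v / (lam - alpha p v) ^ 2 :=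
          div_nonneg (hp v).le (sq_nonneg _)
        exact mul_le_mul_of_nonneg_right (inv_anti₀ hcpos (hqc v)) hX
    set f : Lp ℝ 2 G.measure := hFmem.toLp F with hfdef
    have hcoe : ∀ v, (f : ℕ → ℝ) v = F v := graph_ae_all G hFmem.coeFn_toLp
    have hS1 : HasSum (fun u => p u * F u) 1 := by
      have h2 : (fun u => p u * F u) = fun j => alpha p j / (alpha p j - lam) := by
        funext j
        rw [halpha j]
        simp only [hFdef]
        rw [div_eq_mul_inv]
      rw [h2]
      exact hi
    refine ⟨f, ?_, ?_⟩
    · intro h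
      have h1 : (f : ℕ → ℝ) =ᶠ[ae G.measure] (0 : ℕ → ℝ) := by
        rw [h]
        exact Lp.coeFn_zero ℝ 2 G.measure
      have h2 : (f : ℕ → ℝ) 0 = 0 := graph_ae_all G h1 0
      rw [hcoe 0] at h2
      exact hF0 0 h2
    · -- eigen equation
      refine Lp.ext ?_
      filter_upwards [hP f, Lp.coeFn_smul lam f] with v e1 e2
      rw [e1, e2]
      have htsum : ∑' u, G.m v u * (f : ℕ → ℝ) u = p v * 1 - p v * (p v * F v) := by
        have h1 : HasSum (fun u => p v * (p u * F u)) (p v * 1) := hS1.mul_left _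
        have h2 := h1.update v 0
        have h3 : Function.update (fun u => p v * (p u * F u)) v 0
            = fun u => G.m v u * (f : ℕ → ℝ) u := by
          funext u
          rw [hG, Function.update_apply, hcoe u]
          by_cases h : u = v
          · simp [h]
          · simp only [h, if_false]
            rw [if_neg (fun h' : v = u => h h'.symm)]
            ring
        rw [← h3, h2.tsum_eq]
        ring
      rw [htsum, hdeg v]
      simp only [Pi.smul_apply, smul_eq_mul]
      rw [hcoe v]
      simp only [hFdef]
      rw [inv_mul_eq_iff_eq_mul₀ (mul_ne_zero (hp v).ne' (hq v).ne')]
      linear_combination (-(p v)) * mul_inv_cancel₀ (hden v)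
end
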